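/- arXiv:1310.5903 — 7 statements merged into one kernel-verified Lean document; each statement's English description precedes it below -/
import Mathlib

section
/- Let g : ℝ → ℝ be continuous with g(s) ≥ 0 for s < 0, and suppose there is s₀ ≥ 0 such that g(s) ≤ 0 for all s ≥ s₀. If u is a solution of −div(φ(|∇u|)∇u) = g(u) in Ω, u = 0 on ∂Ω, then 0 ≤ u(x) ≤ s₀ for all x ∈ Ω. -/
open MeasureTheory Set Filter
open scoped RealInnerProductSpace Topology

/-- `u` is a solution of `-div(φ(|∇u|)∇u) = g(u)` in `Ω`, `u = 0` on `∂Ω`: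
`u ∈ C¹(Ω̄)`, `u = 0` on `∂Ω`, and the weak formulation holds for all test
functions `v ∈ C¹(Ω̄)` vanishing on `∂Ω`. -/
def IsWeakSolution {N : ℕ} (Ω : Set (EuclideanSpace ℝ (Fin N)))
    (φ : ℝ → ℝ) (g : ℝ → ℝ) (u : EuclideanSpace ℝ (Fin N) → ℝ) : Prop :=
  ContDiffOn ℝ 1 u (closure Ω) ∧ (∀ x ∈ frontier Ω, u x = 0) ∧
  ∀ v : EuclideanSpace ℝ (Fin N) → ℝ, ContDiffOn ℝ 1 v (closure Ω) →
    (∀ x ∈ frontier Ω, v x = 0) →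
    ∫ x in Ω, ⟪(φ ‖gradient u x‖) • gradient u x, gradient v x⟫ =
      ∫ x in Ω, g (u x) * v x

private lemma hasDerivAt_maxsq (c t : ℝ) :
    HasDerivAt (fun s : ℝ => max (s - c) 0 ^ 2) (2 * max (t - c) 0) t := by
  rcases lt_trichotomy t c with h | h | h
  · have heq : (fun s : ℝ => max (s - c) 0 ^ 2) =ᶠ[𝓝 t] fun _ => (0:ℝ) := by
      filter_upwards [eventually_lt_nhds h] with s hs
      rw [max_eq_right (by linarith : s - c ≤ 0)]
      norm_num
    have h0 : (2 : ℝ) * max (t - c) 0 = 0 := by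
      rw [max_eq_right (by linarith : t - c ≤ 0), mul_zero]
    rw [h0]
    exact (hasDerivAt_const t (0:ℝ)).congr_of_eventuallyEq heq
  · subst h
    have h0 : (2 : ℝ) * max (t - t) 0 = 0 := by simp
    rw [h0, hasDerivAt_iff_isLittleO]
    rw [Asymptotics.isLittleO_iff]
    intro ε hε
    have hev : ∀ᶠ s in 𝓝 t, |s - t| < ε := by
      filter_upwards [Metric.ball_mem_nhds t hε] with s hs
      simpa [Real.dist_eq] using hs
    filter_upwards [hev] with s hs
    have h1 : max (s - t) 0 ≤ |s - t| := by
      rcases le_total (s - t) 0 with h2 | h2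
      · rw [max_eq_right h2]; exact abs_nonneg _
      · rw [max_eq_left h2]; exact le_abs_self _
    have h2 : (0:ℝ) ≤ max (s - t) 0 := le_max_right _ _
    have h3 : max (s - t) 0 ^ 2 ≤ |s - t| * |s - t| := by nlinarith
    have h4 : |s - t| * |s - t| ≤ ε * |s - t| :=
      mul_le_mul_of_nonneg_right hs.le (abs_nonneg _)
    have h5 : max (t - t) 0 ^ 2 = 0 := by simp
    simp only [smul_zero, sub_zero, h5, Real.norm_eq_abs]
    rw [abs_of_nonneg (by positivity : (0:ℝ) ≤ max (s - t) 0 ^ 2)]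
    calc max (s - t) 0 ^ 2 ≤ ε * |s - t| := le_trans h3 h4
      _ = ε * ‖s - t‖ := by rw [Real.norm_eq_abs]
  · have heq : (fun s : ℝ => max (s - c) 0 ^ 2) =ᶠ[𝓝 t] fun s => (s - c) ^ 2 := by
      filter_upwards [eventually_gt_nhds h] with s hs
      rw [max_eq_left (by linarith : (0:ℝ) ≤ s - c)]
    have hd : HasDerivAt (fun s : ℝ => (s - c) ^ 2) (2 * (t - c)) t := by
      have := ((hasDerivAt_id t).sub_const c).fun_pow 2
      simpa using this
    have h0 : (2 : ℝ) * max (t - c) 0 = 2 * (t - c) := by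
      rw [max_eq_left (by linarith : (0:ℝ) ≤ t - c)]
    rw [h0]
    exact hd.congr_of_eventuallyEq heq

private lemma contDiff_maxsq (c : ℝ) :
    ContDiff ℝ 1 (fun s : ℝ => max (s - c) 0 ^ 2) := by
  rw [contDiff_one_iff_deriv]
  constructor
  · exact fun t => (hasDerivAt_maxsq c t).differentiableAt
  · have hderiv : deriv (fun s : ℝ => max (s - c) 0 ^ 2) = fun t => 2 * max (t - c) 0 := by
      funext t; exact (hasDerivAt_maxsq c t).deriv
    rw [hderiv]
    exact continuous_const.mul ((continuous_id.sub continuous_const).max continuous_const)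

set_option maxHeartbeats 1000000 in
private lemma key {N : ℕ} (hN : 0 < N) (Ω : Set (EuclideanSpace ℝ (Fin N)))
    (hΩo : IsOpen Ω) (hΩb : Bornology.IsBounded Ω) (hΩc : IsConnected Ω)
    (φ : ℝ → ℝ) (hφC1 : ContDiffOn ℝ 1 φ (Ioi 0)) (hφpos : ∀ t > 0, 0 < φ t)
    (hφ1i : Tendsto (fun t => t * φ t) (𝓝[>] 0) (𝓝 0))
    (g : ℝ → ℝ) (s₀ : ℝ) (hs₀ : 0 ≤ s₀) (hgpos : ∀ s > s₀, g s ≤ 0)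
    (u : EuclideanSpace ℝ (Fin N) → ℝ) (hu : IsWeakSolution Ω φ g u) :
    ∀ x ∈ Ω, u x ≤ s₀ := by
  by_contra hcon
  push_neg at hcon
  obtain ⟨x₁, hx₁Ω, hx₁⟩ := hcon
  obtain ⟨huC1, hu0, hweak⟩ := hu
  have hΩsub : Ω ⊆ closure Ω := subset_closure
  have hcc : IsCompact (closure Ω) := hΩb.isCompact_closure
  have hucont : ContinuousOn u (closure Ω) := huC1.continuousOn
  obtain ⟨xm, hxmc, hxmmax⟩ := hcc.exists_isMaxOn ⟨x₁, hΩsub hx₁Ω⟩ hucont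
  set M := u xm with hM
  have hMs₀ : s₀ < M := lt_of_lt_of_le hx₁ (hxmmax (hΩsub hx₁Ω))
  set c : ℝ := s₀ + (M - s₀)/3 with hc
  set c' : ℝ := s₀ + 2*(M - s₀)/3 with hc'
  have hsc : s₀ < c := by rw [hc]; linarith
  have hc0 : 0 < c := lt_of_le_of_lt hs₀ hsc
  have hcc' : c < c' := by rw [hc, hc']; linarith
  have hc'M : c' < M := by rw [hc']; linarith
  -- differentiability and continuity of the gradient on Ω
  have hdiff : ∀ x ∈ Ω, DifferentiableAt ℝ u x := fun x hx =>
    (huC1.differentiableOn one_ne_zero x (hΩsub hx)).differentiableAt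
      (mem_nhds_iff.mpr ⟨Ω, hΩsub, hΩo, hx⟩)
  have hfderivcont : ContinuousOn (fderiv ℝ u) Ω :=
    (huC1.mono hΩsub).continuousOn_fderiv_of_isOpen hΩo le_rfl
  have hGcont : ContinuousOn (fun x => gradient u x) Ω :=
    (InnerProductSpace.toDual ℝ
      (EuclideanSpace ℝ (Fin N))).symm.continuous.comp_continuousOn hfderivcont
  -- the test function
  set v : EuclideanSpace ℝ (Fin N) → ℝ := fun y => max (u y - c) 0 ^ 2 with hv
  have hvC1 : ContDiffOn ℝ 1 v (closure Ω) := (contDiff_maxsq c).comp_contDiffOn huC1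
  have hv0 : ∀ x ∈ frontier Ω, v x = 0 := by
    intro x hx
    simp only [hv, hu0 x hx, max_eq_right (by linarith : (0:ℝ) - c ≤ 0)]
    norm_num
  have hE := hweak v hvC1 hv0
  have hgradv : ∀ x ∈ Ω, gradient v x = (2 * max (u x - c) 0) • gradient u x := by
    intro x hx
    have h1 : HasFDerivAt v ((2 * max (u x - c) 0) • fderiv ℝ u x) x :=
      (hasDerivAt_maxsq c (u x)).comp_hasFDerivAt x (hdiff x hx).hasFDerivAt
    show (InnerProductSpace.toDual ℝ _).symm (fderiv ℝ v x) = _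
    rw [h1.fderiv, _root_.map_smul]
    rfl
  set f : EuclideanSpace ℝ (Fin N) → ℝ :=
    fun x => ‖gradient u x‖ ^ 2 * φ ‖gradient u x‖ * (2 * max (u x - c) 0) with hf
  have hinteq : ∫ x in Ω, ⟪(φ ‖gradient u x‖) • gradient u x, gradient v x⟫
      = ∫ x in Ω, f x := by
    apply setIntegral_congr_fun hΩo.measurableSet
    intro x hx
    simp only [hgradv x hx, real_inner_smul_left, real_inner_smul_right,
      real_inner_self_eq_norm_sq, hf]
    ring
  have hRHS : (∫ x in Ω, g (u x) * v x) ≤ 0 := by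
    apply setIntegral_nonpos hΩo.measurableSet
    intro x _
    rcases le_or_gt (u x) c with h | h
    · have hvx : v x = 0 := by
        simp only [hv, max_eq_right (by linarith : u x - c ≤ 0)]
        norm_num
      rw [hvx, mul_zero]
    · exact mul_nonpos_of_nonpos_of_nonneg (hgpos _ (by linarith)) (sq_nonneg _)
  have hfnn : ∀ x ∈ Ω, 0 ≤ f x := by
    intro x _
    rcases eq_or_lt_of_le (norm_nonneg (gradient u x)) with h | h
    · simp [hf, ← h]
    · exact mul_nonneg (mul_nonneg (sq_nonneg _) (hφpos _ h).le)
        (mul_nonneg (by norm_num) (le_max_right _ _))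
  have hLHSnn : 0 ≤ ∫ x in Ω, f x := setIntegral_nonneg hΩo.measurableSet hfnn
  have hInt0 : ∫ x in Ω, f x = 0 :=
    le_antisymm (by rw [← hinteq, hE]; exact hRHS) hLHSnn
  -- continuity of f on Ω
  have hψ : ContinuousOn (fun t : ℝ => t ^ 2 * φ t) (Ici 0) := by
    intro t ht
    rcases eq_or_lt_of_le (mem_Ici.mp ht) with h | h
    · subst h
      have htend : Tendsto (fun t : ℝ => t ^ 2 * φ t) (𝓝[>] (0:ℝ)) (𝓝 0) := by
        have h1 : Tendsto (fun t : ℝ => t * (t * φ t)) (𝓝[>] (0:ℝ)) (𝓝 (0 * 0)) :=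
          (tendsto_id.mono_left nhdsWithin_le_nhds).mul hφ1i
        have h2 : (fun t : ℝ => t ^ 2 * φ t) = fun t : ℝ => t * (t * φ t) := by
          funext t; ring
        rw [h2]
        simpa using h1
      rw [← Ioi_insert, continuousWithinAt_insert_self]
      show Tendsto (fun t : ℝ => t ^ 2 * φ t) (𝓝[Ioi 0] 0) (𝓝 ((0:ℝ) ^ 2 * φ 0))
      simpa using htend
    · have hφt : ContinuousAt φ t := hφC1.continuousOn.continuousAt (Ioi_mem_nhds h)
      exact (((continuous_pow 2).continuousAt).mul hφt).continuousWithinAt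
  have hfc : ContinuousOn f Ω := by
    have h1 : ContinuousOn (fun x => ‖gradient u x‖) Ω := hGcont.norm
    have h2 : ContinuousOn (fun x => ‖gradient u x‖ ^ 2 * φ ‖gradient u x‖) Ω :=
      hψ.comp h1 (fun x _ => mem_Ici.mpr (norm_nonneg _))
    exact h2.mul
      ((continuous_const.mul ((continuous_id.sub continuous_const).max
        continuous_const)).comp_continuousOn (hucont.mono hΩsub))
  -- f is integrable on Ω
  have hKcompact : IsCompact (closure Ω ∩ u ⁻¹' (Ici c)) :=
    hcc.of_isClosed_subset
      (hucont.preimage_isClosed_of_isClosed isClosed_closure isClosed_Ici)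
      inter_subset_left
  have hclosureU : closure Ω = Ω ∪ frontier Ω := by
    rw [closure_eq_self_union_frontier]
  have hKΩ : closure Ω ∩ u ⁻¹' (Ici c) ⊆ Ω := by
    rintro x ⟨hx1, hx2⟩
    rw [hclosureU] at hx1
    rcases hx1 with hx1 | hx1
    · exact hx1
    · exfalso
      have := hu0 x hx1
      have h2 : c ≤ u x := hx2
      linarith
  obtain ⟨C, hC⟩ := hKcompact.exists_bound_of_continuousOn (hfc.mono hKΩ)
  have hbdd : ∀ x ∈ Ω, ‖f x‖ ≤ max C 0 := by
    intro x hx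
    rcases le_or_gt c (u x) with h | h
    · exact le_max_of_le_left (hC x ⟨hΩsub hx, h⟩)
    · have hfx : f x = 0 := by
        simp only [hf, max_eq_right (by linarith : u x - c ≤ 0)]
        ring
      simp [hfx]
  have hfint : IntegrableOn f Ω volume := by
    have hμ : volume Ω ≠ ⊤ := hΩb.measure_lt_top.ne
    have hmeas : AEStronglyMeasurable f (volume.restrict Ω) :=
      hfc.aestronglyMeasurable hΩo.measurableSet
    have hb : ∀ᵐ a ∂(volume.restrict Ω), ‖f a‖ ≤ max C 0 :=
      (ae_restrict_iff' hΩo.measurableSet).mpr (ae_of_all _ hbdd)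
    exact ⟨hmeas, HasFiniteIntegral.restrict_of_bounded _ hΩb.measure_lt_top hb⟩
  have hae : f =ᵐ[volume.restrict Ω] 0 :=
    (integral_eq_zero_iff_of_nonneg_ae
      ((ae_restrict_iff' hΩo.measurableSet).mpr (ae_of_all _ hfnn)) hfint).mp hInt0
  -- the gradient of u vanishes where u > c'
  have hgrad0 : ∀ z ∈ Ω, c' < u z → fderiv ℝ u z = 0 := by
    intro z hz hz'
    by_contra hne
    have hGz : gradient u z ≠ 0 := by
      intro h0
      apply hne
      have h1 := congrArg (InnerProductSpace.toDual ℝ (EuclideanSpace ℝ (Fin N))) h0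
      simpa [gradient] using h1
    have hfz : 0 < f z := by
      have h1 : 0 < ‖gradient u z‖ := norm_pos_iff.mpr hGz
      have h2 : 0 < max (u z - c) 0 := lt_max_iff.mpr (Or.inl (by linarith))
      exact mul_pos (mul_pos (pow_pos h1 2) (hφpos _ h1))
        (mul_pos (by norm_num) h2)
    set V := Ω ∩ f ⁻¹' (Ioi (f z / 2)) with hV
    have hVopen : IsOpen V := hfc.isOpen_inter_preimage hΩo isOpen_Ioi
    have hzV : z ∈ V := ⟨hz, by simp only [mem_preimage, mem_Ioi]; linarith⟩
    have hVpos : 0 < volume V := hVopen.measure_pos volume ⟨z, hzV⟩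
    have hV0 : volume V = 0 := by
      have h1 : volume.restrict Ω {x | ¬ f x = (0 : EuclideanSpace ℝ (Fin N) → ℝ) x} = 0 :=
        ae_iff.mp hae
      have h2 : V ⊆ {x | ¬ f x = (0 : EuclideanSpace ℝ (Fin N) → ℝ) x} := by
        rintro x ⟨_, hx2⟩
        have : f z / 2 < f x := hx2
        simp only [mem_setOf_eq, Pi.zero_apply]
        intro h
        rw [h] at this
        linarith
      have h3 : volume V = volume.restrict Ω V := by
        rw [Measure.restrict_apply hVopen.measurableSet]
        congr 1
        exact (inter_eq_left.mpr (fun x hx => hx.1)).symm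
      rw [h3]
      exact le_antisymm (le_trans (measure_mono h2) h1.le) (zero_le)
    exact absurd hV0 hVpos.ne'
  -- xm is in Ω
  have hM0 : 0 < M := lt_of_le_of_lt hs₀ hMs₀
  have hxmΩ : xm ∈ Ω := by
    rw [hclosureU] at hxmc
    rcases hxmc with h | h
    · exact h
    · exfalso
      have := hu0 xm h
      rw [← hM] at this
      linarith
  -- u is constant equal to M on Ω
  have hCopen : IsOpen (Ω ∩ u ⁻¹' {M}) := by
    rw [Metric.isOpen_iff]
    rintro x ⟨hxΩ, hxM⟩
    have hxM' : u x = M := hxM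
    have hAopen : IsOpen (Ω ∩ u ⁻¹' (Ioi c')) :=
      (hucont.mono hΩsub).isOpen_inter_preimage hΩo isOpen_Ioi
    have hxA : x ∈ Ω ∩ u ⁻¹' (Ioi c') :=
      ⟨hxΩ, by simp only [mem_preimage, mem_Ioi, hxM']; exact hc'M⟩
    obtain ⟨ε, hε, hball⟩ := Metric.isOpen_iff.mp hAopen x hxA
    refine ⟨ε, hε, ?_⟩
    intro y hy
    have hconst : u y = u x := by
      apply (convex_ball x ε).is_const_of_fderivWithin_eq_zero
        (fun w hw => (hdiff w (hball hw).1).differentiableWithinAt)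
        (fun w hw => ?_) hy (Metric.mem_ball_self hε)
      rw [fderivWithin_of_isOpen Metric.isOpen_ball hw]
      exact hgrad0 w (hball hw).1 (hball hw).2
    exact ⟨(hball hy).1, by simp only [mem_preimage, mem_singleton_iff, hconst, hxM']⟩
  have hall : ∀ x ∈ Ω, u x = M := by
    by_contra hcon2
    push_neg at hcon2
    obtain ⟨z, hzΩ, hzM⟩ := hcon2
    have hVopen' : IsOpen (Ω ∩ u ⁻¹' {M}ᶜ) :=
      (hucont.mono hΩsub).isOpen_inter_preimage hΩo (isOpen_compl_iff.mpr isClosed_singleton)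
    obtain ⟨w, hwΩ, hw⟩ := hΩc.isPreconnected (Ω ∩ u ⁻¹' {M}) (Ω ∩ u ⁻¹' {M}ᶜ)
      hCopen hVopen'
      (fun x hx => by
        rcases eq_or_ne (u x) M with h | h
        · exact Or.inl ⟨hx, h⟩
        · exact Or.inr ⟨hx, h⟩)
      ⟨xm, hxmΩ, ⟨hxmΩ, rfl⟩⟩
      ⟨z, hzΩ, ⟨hzΩ, hzM⟩⟩
    exact hw.2.2 hw.1.2
  -- frontier is nonempty
  have hfront : (frontier Ω).Nonempty := by
    by_contra h
    rw [not_nonempty_iff_eq_empty] at h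
    have hclopen : IsClopen Ω := isClopen_iff_frontier_eq_empty.mpr h
    rcases isClopen_iff.mp hclopen with h1 | h1
    · exact hΩc.nonempty.ne_empty h1
    · haveI : Nonempty (Fin N) := ⟨⟨0, hN⟩⟩
      haveI : Nontrivial (EuclideanSpace ℝ (Fin N)) := by infer_instance
      exact NormedSpace.unbounded_univ ℝ (EuclideanSpace ℝ (Fin N)) (h1 ▸ hΩb)
  obtain ⟨y, hy⟩ := hfront
  have hyM : u y = M := by
    have hNeBot : (𝓝[Ω] y).NeBot := by
      rw [← mem_closure_iff_nhdsWithin_neBot]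
      have h1 : y ∈ closure Ω := frontier_subset_closure hy
      rw [hclosureU] at h1
      rcases h1 with h1 | h1
      · exact subset_closure h1
      · rw [frontier_eq_closure_inter_closure] at hy
        exact hy.1
    have ht1 : Tendsto u (𝓝[Ω] y) (𝓝 (u y)) :=
      (hucont y (frontier_subset_closure hy)).mono hΩsub
    have ht2 : Tendsto u (𝓝[Ω] y) (𝓝 M) := by
      apply Tendsto.congr' _ tendsto_const_nhds
      filter_upwards [self_mem_nhdsWithin] with x hx
      exact (hall x hx).symm
    exact tendsto_nhds_unique ht1 ht2
  have hy0 : u y = 0 := hu0 y hy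
  rw [hy0] at hyM
  linarith

theorem solutions_bounded_between
    {N : ℕ} (hN : 0 < N) (Ω : Set (EuclideanSpace ℝ (Fin N)))
    (hΩo : IsOpen Ω) (hΩb : Bornology.IsBounded Ω) (hΩc : IsConnected Ω)
    (φ : ℝ → ℝ) (hφC1 : ContDiffOn ℝ 1 φ (Ioi 0)) (hφpos : ∀ t > 0, 0 < φ t)
    (hφ1i : Tendsto (fun t => t * φ t) (𝓝[>] 0) (𝓝 0))
    (hφ1ii : Tendsto (fun t => t * φ t) atTop atTop)
    (hφ2 : StrictMonoOn (fun t => t * φ t) (Ioi 0))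
    (g : ℝ → ℝ) (hg : Continuous g)
    (hgneg : ∀ s < (0 : ℝ), 0 ≤ g s)
    (s₀ : ℝ) (hs₀ : 0 ≤ s₀) (hgpos : ∀ s ≥ s₀, g s ≤ 0)
    (u : EuclideanSpace ℝ (Fin N) → ℝ) (hu : IsWeakSolution Ω φ g u) :
    ∀ x ∈ Ω, 0 ≤ u x ∧ u x ≤ s₀ := by
  intro x hx
  constructor
  · have hgradneg : ∀ y, gradient (fun z => -u z) y = -gradient u y := by
      intro y
      show (InnerProductSpace.toDual ℝ _).symm (fderiv ℝ (fun z => -u z) y) = _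
      rw [fderiv_fun_neg, map_neg]
      rfl
    have hw : IsWeakSolution Ω φ (fun s => -g (-s)) (fun y => -u y) := by
      obtain ⟨h1, h2, h3⟩ := hu
      refine ⟨h1.neg, fun z hz => by simp [h2 z hz], fun v hv hv0 => ?_⟩
      calc ∫ y in Ω, ⟪(φ ‖gradient (fun z => -u z) y‖) • gradient (fun z => -u z) y,
              gradient v y⟫
          = ∫ y in Ω, -⟪(φ ‖gradient u y‖) • gradient u y, gradient v y⟫ := by
            apply setIntegral_congr_fun hΩo.measurableSet
            intro y _
            simp only [hgradneg, norm_neg, smul_neg, inner_neg_left]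
        _ = -∫ y in Ω, ⟪(φ ‖gradient u y‖) • gradient u y, gradient v y⟫ := integral_neg _
        _ = -∫ y in Ω, g (u y) * v y := by rw [h3 v hv hv0]
        _ = ∫ y in Ω, -(g (u y) * v y) := (integral_neg _).symm
        _ = ∫ y in Ω, (fun s => -g (-s)) ((fun z => -u z) y) * v y := by
            apply setIntegral_congr_fun hΩo.measurableSet
            intro y _
            simp [neg_mul]
    have hkey := key hN Ω hΩo hΩb hΩc φ hφC1 hφpos hφ1i (fun s => -g (-s)) 0 le_rfl
      (fun s hs => neg_nonpos.mpr (hgneg (-s) (by linarith))) (fun y => -u y) hw x hx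
    simpa using hkey
  · exact key hN Ω hΩo hΩb hΩc φ hφC1 hφpos hφ1i g s₀ hs₀
      (fun s hs => hgpos s hs.le) u hu x hx
end

section
/- Let B ⊂ ℝ^N be the open ball of radius R centered at the origin, λ > 0, f : ℝ → ℝ continuous, and let ū ∈ C¹(B̄) be radially symmetric with ū = 0 on ∂B, satisfying ∫_B φ(|∇ū|)∇ū·∇v dx = λ ∫_B f(ū) v dx for all Lipschitz functions v on B̄ vanishing on ∂B. Write u(r) = ū(x) for |x| = r. Then for every r ∈ (0,R): −r^{N−1} φ(|u′(r)|) u′(r) = λ ∫₀^r f(u(t)) t^{N−1} dt. -/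
open MeasureTheory Set Filter
open scoped RealInnerProductSpace Topology

theorem hasGradientAt_norm' {F : Type*} [NormedAddCommGroup F] [InnerProductSpace ℝ F]
    [CompleteSpace F] {x : F} (hx : x ≠ 0) :
    HasGradientAt (fun y : F => ‖y‖) (‖x‖⁻¹ • x) x := by
  have hn : (0:ℝ) < ‖x‖ := norm_pos_iff.2 hx
  have h1 : HasFDerivAt (fun y : F => ‖y‖ ^ 2) (2 • (innerSL ℝ x : F →L[ℝ] ℝ)) x :=
    (hasStrictFDerivAt_norm_sq x).hasFDerivAt
  have hpos : (0:ℝ) < ‖x‖ ^ 2 := by positivity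
  have h2 : HasDerivAt Real.sqrt (1 / (2 * Real.sqrt (‖x‖ ^ 2))) (‖x‖ ^ 2) :=
    Real.hasDerivAt_sqrt hpos.ne'
  have h3 : HasFDerivAt (fun y : F => Real.sqrt (‖y‖ ^ 2))
      ((1 / (2 * Real.sqrt (‖x‖ ^ 2))) • (2 • (innerSL ℝ x : F →L[ℝ] ℝ))) x :=
    h2.comp_hasFDerivAt x h1
  have heq : (fun y : F => Real.sqrt (‖y‖ ^ 2)) = fun y : F => ‖y‖ := by
    funext y; rw [Real.sqrt_sq (norm_nonneg y)]
  rw [heq] at h3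
  rw [hasGradientAt_iff_hasFDerivAt]
  convert h3 using 1
  case e'_8 => rfl
  ext y
  rw [Real.sqrt_sq (norm_nonneg x)]
  simp [InnerProductSpace.toDual_apply_apply, real_inner_smul_left, smul_smul]
  ring_nf

set_option maxHeartbeats 1000000 in
/-- For a radially symmetric `C¹` solution `ū` of the weak formulation on the ball
`B = B(0,R)` (with Lipschitz test functions vanishing on `∂B`), the radial profile `u`
satisfies `-r^{N-1} φ(|u'(r)|) u'(r) = λ ∫₀^r f(u(t)) t^{N-1} dt` for `0 < r < R`. -/
theorem radial_identity
    {N : ℕ} (hN : 0 < N) (R : ℝ) (hR : 0 < R)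
    (φ : ℝ → ℝ) (hφC1 : ContDiffOn ℝ 1 φ (Ioi 0)) (hφpos : ∀ t > 0, 0 < φ t)
    (hφ1i : Tendsto (fun t => t * φ t) (𝓝[>] 0) (𝓝 0))
    (hφ1ii : Tendsto (fun t => t * φ t) atTop atTop)
    (hφ2 : StrictMonoOn (fun t => t * φ t) (Ioi 0))
    (f : ℝ → ℝ) (hf : Continuous f) (lam : ℝ) (hlam : 0 < lam)
    (ubar : EuclideanSpace ℝ (Fin N) → ℝ)
    (hC1 : ContDiffOn ℝ 1 ubar (closure (Metric.ball (0 : EuclideanSpace ℝ (Fin N)) R)))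
    (hbdry : ∀ x ∈ frontier (Metric.ball (0 : EuclideanSpace ℝ (Fin N)) R), ubar x = 0)
    (hradial : ∀ x y : EuclideanSpace ℝ (Fin N), ‖x‖ = ‖y‖ → ubar x = ubar y)
    (hweak : ∀ v : EuclideanSpace ℝ (Fin N) → ℝ, (∃ K, LipschitzOnWith K v (closure (Metric.ball (0 : EuclideanSpace ℝ (Fin N)) R))) →
      (∀ x ∈ frontier (Metric.ball (0 : EuclideanSpace ℝ (Fin N)) R), v x = 0) →
      ∫ x in Metric.ball (0 : EuclideanSpace ℝ (Fin N)) R,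
          ⟪(φ ‖gradient ubar x‖) • gradient ubar x, gradient v x⟫ =
        lam * ∫ x in Metric.ball (0 : EuclideanSpace ℝ (Fin N)) R, f (ubar x) * v x)
    (u : ℝ → ℝ)
    (hu : ∀ x : EuclideanSpace ℝ (Fin N), ‖x‖ ≤ R → u ‖x‖ = ubar x) :
    ∀ r ∈ Ioo (0 : ℝ) R,
      -(r ^ (N - 1) * (φ |deriv u r| * deriv u r)) =
        lam * ∫ t in (0 : ℝ)..r, f (u t) * t ^ (N - 1) := by
  haveI : Nonempty (Fin N) := ⟨⟨0, hN⟩⟩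
  haveI : Nontrivial (EuclideanSpace ℝ (Fin N)) := by
    refine ⟨EuclideanSpace.single ⟨0, hN⟩ (1:ℝ), 0, fun h => ?_⟩
    have h2 : ‖EuclideanSpace.single (⟨0, hN⟩ : Fin N) (1:ℝ)‖ = 0 := by rw [h, norm_zero]
    rw [EuclideanSpace.norm_single] at h2
    norm_num at h2
  set e : EuclideanSpace ℝ (Fin N) := EuclideanSpace.single ⟨0, hN⟩ (1:ℝ) with he
  have hne : ‖e‖ = 1 := by rw [he, EuclideanSpace.norm_single]; norm_num
  have hte : ∀ t : ℝ, 0 ≤ t → ‖t • e‖ = t := by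
    intro t ht; rw [norm_smul, hne, mul_one, Real.norm_eq_abs, abs_of_nonneg ht]
  have hueq : ∀ x : EuclideanSpace ℝ (Fin N), ‖x‖ ≤ R → ubar x = u ‖x‖ :=
    fun x h => (hu x h).symm
  have hclos : closure (Metric.ball (0 : EuclideanSpace ℝ (Fin N)) R) = Metric.closedBall 0 R :=
    closure_ball 0 hR.ne'
  have hdiff : ∀ x : EuclideanSpace ℝ (Fin N), ‖x‖ < R → DifferentiableAt ℝ ubar x := by
    intro x hx
    have h1 : DifferentiableOn ℝ ubar (Metric.closedBall 0 R) := by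
      rw [← hclos]; exact hC1.differentiableOn one_ne_zero
    refine h1.differentiableAt (Filter.mem_of_superset
      (Metric.isOpen_ball.mem_nhds (mem_ball_zero_iff.2 hx)) Metric.ball_subset_closedBall)
  have huD : ∀ t ∈ Ioo (0:ℝ) R, HasDerivAt u ((fderiv ℝ ubar (t • e)) e) t := by
    intro t ht
    have hdc : HasDerivAt (fun s : ℝ => s • e) ((1:ℝ) • e) t := (hasDerivAt_id t).smul_const e
    have h2 : HasDerivAt (fun s : ℝ => ubar (s • e)) ((fderiv ℝ ubar (t • e)) ((1:ℝ) • e)) t :=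
      (hdiff _ (by rw [hte t ht.1.le]; exact ht.2)).hasFDerivAt.comp_hasDerivAt t hdc
    rw [one_smul] at h2
    apply h2.congr_of_eventuallyEq
    filter_upwards [Ioo_mem_nhds ht.1 ht.2] with s hs
    rw [← hu (s • e) (by rw [hte s hs.1.le]; exact hs.2.le), hte s hs.1.le]
  have hDval : ∀ t ∈ Ioo (0:ℝ) R, deriv u t = (fderiv ℝ ubar (t • e)) e :=
    fun t ht => (huD t ht).deriv
  have hUD : UniqueDiffOn ℝ (Metric.closedBall (0 : EuclideanSpace ℝ (Fin N)) R) := by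
    refine uniqueDiffOn_convex (convex_closedBall _ _) ?_
    rw [interior_closedBall 0 hR.ne']
    exact ⟨0, mem_ball_zero_iff.2 (by simpa using hR)⟩
  have hC1' : ContDiffOn ℝ 1 ubar (Metric.closedBall (0 : EuclideanSpace ℝ (Fin N)) R) := by
    rwa [hclos] at hC1
  have hWcont : ContinuousOn (fun y => fderivWithin ℝ ubar (Metric.closedBall 0 R) y)
      (Metric.closedBall (0 : EuclideanSpace ℝ (Fin N)) R) :=
    hC1'.continuousOn_fderivWithin hUD le_rfl
  have hfd : ∀ x : EuclideanSpace ℝ (Fin N), ‖x‖ < R →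
      fderivWithin ℝ ubar (Metric.closedBall 0 R) x = fderiv ℝ ubar x := by
    intro x hx
    exact fderivWithin_of_mem_nhds (Filter.mem_of_superset
      (Metric.isOpen_ball.mem_nhds (mem_ball_zero_iff.2 hx)) Metric.ball_subset_closedBall)
  have hDcont : ContinuousOn (deriv u) (Ioo 0 R) := by
    have h1 : ContinuousOn (fun t : ℝ =>
        (fderivWithin ℝ ubar (Metric.closedBall 0 R) (t • e)) e) (Ioo 0 R) := by
      refine ContinuousOn.clm_apply ?_ continuousOn_const
      refine hWcont.comp (Continuous.continuousOn (by continuity)) ?_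
      intro t ht
      rw [Metric.mem_closedBall, dist_zero_right, hte t ht.1.le]
      exact ht.2.le
    refine (h1.congr ?_)
    intro t ht
    show deriv u t = (fderivWithin ℝ ubar (Metric.closedBall 0 R) (t • e)) e
    rw [hDval t ht, hfd (t • e) (by rw [hte t ht.1.le]; exact ht.2)]
  have hgradu : ∀ x : EuclideanSpace ℝ (Fin N), 0 < ‖x‖ → ‖x‖ < R →
      HasGradientAt ubar ((deriv u ‖x‖) • (‖x‖⁻¹ • x)) x := by
    intro x h0 hxR
    have hx0 : x ≠ 0 := fun h => by rw [h, norm_zero] at h0; exact lt_irrefl _ h0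
    have hn := hasGradientAt_norm' (x := x) hx0
    have hu' : HasDerivAt u (deriv u ‖x‖) ‖x‖ := by
      have h3 := huD ‖x‖ ⟨h0, hxR⟩; rwa [← hDval ‖x‖ ⟨h0, hxR⟩] at h3
    have hcomp : HasFDerivAt (fun y : EuclideanSpace ℝ (Fin N) => u ‖y‖)
        ((deriv u ‖x‖) • (InnerProductSpace.toDual ℝ (EuclideanSpace ℝ (Fin N)) (‖x‖⁻¹ • x) :
          EuclideanSpace ℝ (Fin N) →L[ℝ] ℝ)) x :=
      hu'.comp_hasFDerivAt x hn.hasFDerivAt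
    have h4 : HasGradientAt (fun y : EuclideanSpace ℝ (Fin N) => u ‖y‖)
        ((deriv u ‖x‖) • (‖x‖⁻¹ • x)) x := by
      rw [hasGradientAt_iff_hasFDerivAt, _root_.map_smul]
      exact hcomp
    apply h4.congr_of_eventuallyEq
    filter_upwards [Metric.isOpen_ball.mem_nhds (mem_ball_zero_iff.2 hxR)] with y hy
    exact hueq y (le_of_lt (mem_ball_zero_iff.1 hy))
  have hgradval : ∀ x : EuclideanSpace ℝ (Fin N), 0 < ‖x‖ → ‖x‖ < R →
      gradient ubar x = (deriv u ‖x‖) • (‖x‖⁻¹ • x) :=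
    fun x h0 hxR => (hgradu x h0 hxR).gradient
  have hgradnorm : ∀ x : EuclideanSpace ℝ (Fin N), 0 < ‖x‖ → ‖x‖ < R →
      ‖gradient ubar x‖ = |deriv u ‖x‖| := by
    intro x h0 hxR
    rw [hgradval x h0 hxR, norm_smul, norm_smul, norm_inv, norm_norm,
      inv_mul_cancel₀ h0.ne', mul_one, Real.norm_eq_abs]
  -- continuity of s ↦ φ |s| * s
  have hphicont : ∀ s : ℝ, ContinuousAt (fun s : ℝ => φ |s| * s) s := by
    intro s
    rcases eq_or_ne s 0 with rfl | hs
    · have key0 : Tendsto (fun s : ℝ => φ |s| * s) (𝓝[≠] (0:ℝ)) (𝓝 0) := by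
        have habs : Tendsto (fun s : ℝ => |s|) (𝓝[≠] (0:ℝ)) (𝓝[>] 0) :=
          tendsto_abs_nhdsNE_zero
        have h2 : Tendsto (fun s : ℝ => |s| * φ |s|) (𝓝[≠] (0:ℝ)) (𝓝 0) := hφ1i.comp habs
        refine squeeze_zero_norm' ?_ h2
        filter_upwards [self_mem_nhdsWithin] with s hs
        have h0 : 0 < |s| := abs_pos.2 hs
        have hphipos : 0 < φ |s| := hφpos _ h0
        rw [Real.norm_eq_abs, abs_mul, abs_of_pos hphipos, mul_comm]
      have hval : (fun s : ℝ => φ |s| * s) 0 = 0 := by simp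
      have hsup : Tendsto (fun s : ℝ => φ |s| * s) (𝓝[≠] (0:ℝ) ⊔ pure 0) (𝓝 0) := by
        refine Filter.tendsto_sup.2 ⟨key0, tendsto_pure_left.2 fun s hs => ?_⟩
        simpa [hval] using mem_of_mem_nhds hs
      unfold ContinuousAt
      rw [hval]
      exact (nhdsNE_sup_pure (0:ℝ)) ▸ hsup
    · have h1 : ContinuousAt φ |s| :=
        hφC1.continuousOn.continuousAt (Ioi_mem_nhds (abs_pos.2 hs))
      exact (h1.comp continuous_abs.continuousAt).mul continuousAt_id
  have hHcont : ContinuousOn (fun t : ℝ => t ^ (N-1) * (φ |deriv u t| * deriv u t)) (Ioo 0 R) := by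
    refine (continuousOn_pow _).mul ?_
    intro t ht
    exact (hphicont (deriv u t)).comp_continuousWithinAt (hDcont t ht)
  have hucont : ContinuousOn u (Icc 0 R) := by
    have h1 : ContinuousOn (fun t : ℝ => ubar (t • e)) (Icc 0 R) := by
      refine hC1'.continuousOn.comp (Continuous.continuousOn (by continuity)) ?_
      intro t ht; rw [Metric.mem_closedBall, dist_zero_right, hte t ht.1]; exact ht.2
    refine h1.congr fun t ht => ?_
    dsimp only
    rw [← hu (t • e) (by rw [hte t ht.1]; exact ht.2), hte t ht.1]
  have hvol : (0:ℝ) < (volume (Metric.ball (0 : EuclideanSpace ℝ (Fin N)) 1)).toReal :=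
    ENNReal.toReal_pos (ne_of_gt (Metric.measure_ball_pos _ _ one_pos)) measure_ball_lt_top.ne
  have hdim : Module.finrank ℝ (EuclideanSpace ℝ (Fin N)) = N := finrank_euclideanSpace_fin
  have key : ∀ r ∈ Ioo (0:ℝ) R, ∀ ε : ℝ, 0 < ε → r + ε < R →
      (-ε⁻¹) * (∫ t in r..(r+ε), t ^ (N-1) * (φ |deriv u t| * deriv u t)) =
      lam * ∫ t in (0:ℝ)..(r+ε),
        (f (u t) * t ^ (N-1)) * max 0 (min 1 ((r + ε - t)/ε)) := by
    intro r hr ε hε hεR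
    set g : ℝ → ℝ := fun t => max 0 (min 1 ((r + ε - t)/ε)) with hgdef
    set v : EuclideanSpace ℝ (Fin N) → ℝ := fun x => g ‖x‖ with hvdef
    have hg1 : ∀ t : ℝ, t ≤ r → g t = 1 := by
      intro t ht
      have h1 : (1:ℝ) ≤ (r + ε - t)/ε := by rw [le_div_iff₀ hε]; linarith
      rw [hgdef]; dsimp only; rw [min_eq_left h1, max_eq_right zero_le_one]
    have hg0 : ∀ t : ℝ, r + ε ≤ t → g t = 0 := by
      intro t ht
      have h1 : (r + ε - t)/ε ≤ 0 := div_nonpos_iff.2 (Or.inr ⟨by linarith, hε.le⟩)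
      rw [hgdef]; dsimp only
      rw [min_eq_right (le_trans h1 zero_le_one), max_eq_left h1]
    have hgmid : ∀ t : ℝ, r ≤ t → t ≤ r + ε → g t = (r + ε - t)/ε := by
      intro t h1 h2
      have ha : (r + ε - t)/ε ≤ 1 := by rw [div_le_iff₀ hε]; linarith
      have hb : 0 ≤ (r + ε - t)/ε := div_nonneg (by linarith) hε.le
      rw [hgdef]; dsimp only; rw [min_eq_right ha, max_eq_right hb]
    have hgnonneg : ∀ t, 0 ≤ g t := fun t => le_max_left _ _
    have hgle1 : ∀ t, g t ≤ 1 := fun t => max_le zero_le_one (min_le_left _ _)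
    have hlip : ∃ K, LipschitzOnWith K v
        (closure (Metric.ball (0 : EuclideanSpace ℝ (Fin N)) R)) := by
      refine ⟨(ε⁻¹).toNNReal * 1, LipschitzWith.lipschitzOnWith ?_⟩
      have l1 : LipschitzWith (ε⁻¹).toNNReal (fun t : ℝ => (r + ε - t)/ε) := by
        refine LipschitzWith.of_dist_le_mul fun a b => ?_
        rw [Real.dist_eq, Real.dist_eq]
        have h2 : (r + ε - a)/ε - (r + ε - b)/ε = (b - a)/ε := by ring
        rw [h2, abs_div, abs_of_pos hε, Real.coe_toNNReal _ (inv_nonneg.2 hε.le),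
          abs_sub_comm b a, div_eq_mul_inv, mul_comm]
      exact ((l1.const_min 1).const_max 0).comp lipschitzWith_one_norm
    have hbv : ∀ x ∈ frontier (Metric.ball (0 : EuclideanSpace ℝ (Fin N)) R), v x = 0 := by
      intro x hx
      rw [frontier_ball 0 hR.ne'] at hx
      have hxn : ‖x‖ = R := by simpa using hx
      rw [hvdef]; dsimp only; rw [hxn, hg0 R (by linarith)]
    have heq := hweak v hlip hbv
    -- gradient of v
    have hv0in : ∀ x : EuclideanSpace ℝ (Fin N), ‖x‖ < r → gradient v x = 0 := by
      intro x hx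
      have hev : v =ᶠ[𝓝 x] fun _ => (1:ℝ) := by
        filter_upwards [(isOpen_lt continuous_norm continuous_const).mem_nhds hx] with y hy
        exact hg1 ‖y‖ (le_of_lt hy)
      rw [hev.gradient_eq, gradient_fun_const]
    have hv0out : ∀ x : EuclideanSpace ℝ (Fin N), r + ε < ‖x‖ → gradient v x = 0 := by
      intro x hx
      have hev : v =ᶠ[𝓝 x] fun _ => (0:ℝ) := by
        filter_upwards [(isOpen_lt continuous_const continuous_norm).mem_nhds hx] with y hy
        exact hg0 ‖y‖ (le_of_lt hy)
      rw [hev.gradient_eq, gradient_fun_const]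
    have hvmid : ∀ x : EuclideanSpace ℝ (Fin N), r < ‖x‖ → ‖x‖ < r + ε →
        gradient v x = (-ε⁻¹) • (‖x‖⁻¹ • x) := by
      intro x h1 h2
      have h0 : 0 < ‖x‖ := lt_trans hr.1 h1
      have hx0 : x ≠ 0 := fun h => by rw [h, norm_zero] at h0; exact lt_irrefl _ h0
      have hn := (hasGradientAt_norm' (x := x) hx0).hasFDerivAt
      have hF := (hn.const_sub (r + ε)).const_mul ε⁻¹
      have hG : HasGradientAt (fun y : EuclideanSpace ℝ (Fin N) => ε⁻¹ * ((r + ε) - ‖y‖))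
          ((-ε⁻¹) • (‖x‖⁻¹ • x)) x := by
        rw [hasGradientAt_iff_hasFDerivAt, _root_.map_smul]
        convert hF using 1
        case e'_9 => rfl
        rw [neg_smul, ← smul_neg]
      have hev : v =ᶠ[𝓝 x] fun y => ε⁻¹ * ((r + ε) - ‖y‖) := by
        filter_upwards [((isOpen_lt continuous_const continuous_norm).inter
          (isOpen_lt continuous_norm continuous_const)).mem_nhds ⟨h1, h2⟩] with y hy
        rw [hvdef]; dsimp only
        rw [hgmid ‖y‖ hy.1.le hy.2.le, div_eq_inv_mul]
      exact ((hG.congr_of_eventuallyEq hev).gradient)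
    -- LHS conversion to 1-d integral
    set A : ℝ → ℝ :=
      indicator (Ioo r (r+ε)) (fun ρ => (φ |deriv u ρ| * deriv u ρ) * (-ε⁻¹)) with hAdef
    have hsph : ∀ᵐ x : EuclideanSpace ℝ (Fin N) ∂volume,
        x ∉ (Metric.sphere (0 : EuclideanSpace ℝ (Fin N)) r ∪
          Metric.sphere (0 : EuclideanSpace ℝ (Fin N)) (r+ε)) := by
      rw [← measure_eq_zero_iff_ae_notMem]
      exact measure_union_null (Measure.addHaar_sphere volume 0 r)
        (Measure.addHaar_sphere volume 0 (r+ε))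
    have hL1 : ∫ x in Metric.ball (0 : EuclideanSpace ℝ (Fin N)) R,
        ⟪(φ ‖gradient ubar x‖) • gradient ubar x, gradient v x⟫ =
        ∫ x in Metric.ball (0 : EuclideanSpace ℝ (Fin N)) R, A ‖x‖ := by
      refine setIntegral_congr_ae Metric.isOpen_ball.measurableSet ?_
      filter_upwards [hsph] with x hx hxball
      have hxR : ‖x‖ < R := mem_ball_zero_iff.1 hxball
      rcases lt_trichotomy ‖x‖ r with h | h | h
      · rw [hv0in x h, inner_zero_right, hAdef, indicator_of_notMem
          (by simp only [mem_Ioo, not_and, not_lt]; intro hh; linarith)]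
      · exact absurd (Or.inl (by simpa using h)) hx
      · rcases lt_trichotomy ‖x‖ (r+ε) with h2 | h2 | h2
        · have h0 : 0 < ‖x‖ := lt_trans hr.1 h
          rw [hvmid x h h2, hgradnorm x h0 hxR, hgradval x h0 hxR, hAdef,
            indicator_of_mem (mem_Ioo.2 ⟨h, h2⟩)]
          have hw : ‖(‖x‖⁻¹ • x)‖ = 1 := by
            rw [norm_smul, norm_inv, norm_norm, inv_mul_cancel₀ h0.ne']
          rw [smul_smul, real_inner_smul_left, real_inner_smul_right,
            real_inner_self_eq_norm_sq, hw]
          ring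
        · exact absurd (Or.inr (by simpa using h2)) hx
        · rw [hv0out x h2, inner_zero_right, hAdef, indicator_of_notMem
            (by simp only [mem_Ioo, not_and, not_lt]; intro hh; linarith)]
    have hL2 : ∫ x in Metric.ball (0 : EuclideanSpace ℝ (Fin N)) R, A ‖x‖ =
        ∫ x : EuclideanSpace ℝ (Fin N), A ‖x‖ := by
      refine setIntegral_eq_integral_of_ae_compl_eq_zero
        (Filter.Eventually.of_forall fun x hx => ?_)
      have hxR : R ≤ ‖x‖ := not_lt.1 (fun hc => hx (mem_ball_zero_iff.2 hc))
      rw [hAdef, indicator_of_notMem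
        (by simp only [mem_Ioo, not_and, not_lt]; intro hh; linarith)]
    have hL3 : ∫ x : EuclideanSpace ℝ (Fin N), A ‖x‖ =
        N • (volume (Metric.ball (0 : EuclideanSpace ℝ (Fin N)) 1)).toReal •
          ∫ ρ in Ioi (0:ℝ), ρ ^ (N - 1) • A ρ := by
      have h5 := MeasureTheory.integral_fun_norm_addHaar
        (volume : Measure (EuclideanSpace ℝ (Fin N))) A
      rwa [hdim] at h5
    have hL4 : ∫ ρ in Ioi (0:ℝ), ρ ^ (N - 1) • A ρ =
        (-ε⁻¹) * ∫ t in r..(r+ε), t ^ (N-1) * (φ |deriv u t| * deriv u t) := by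
      have hsub : Ioo r (r+ε) ⊆ Ioi (0:ℝ) := fun x hx => lt_trans hr.1 hx.1
      have h1 : ∫ ρ in Ioi (0:ℝ), ρ ^ (N - 1) • A ρ = ∫ ρ in Ioo r (r+ε), ρ ^ (N - 1) • A ρ :=
        setIntegral_eq_of_subset_of_forall_diff_eq_zero measurableSet_Ioi hsub
          (fun x hx => by rw [hAdef, indicator_of_notMem hx.2, smul_zero])
      have h2 : ∫ ρ in Ioo r (r+ε), ρ ^ (N - 1) • A ρ
          = ∫ ρ in Ioo r (r+ε), ρ ^ (N-1) * ((φ |deriv u ρ| * deriv u ρ) * (-ε⁻¹)) :=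
        setIntegral_congr_fun measurableSet_Ioo (fun x hx => by
          rw [hAdef, indicator_of_mem hx, smul_eq_mul])
      rw [h1, h2, ← integral_Ioc_eq_integral_Ioo,
        ← intervalIntegral.integral_of_le (by linarith : r ≤ r + ε)]
      rw [intervalIntegral.integral_congr
        (g := fun t => (-ε⁻¹) * (t ^ (N-1) * (φ |deriv u t| * deriv u t)))
        (fun t _ => by ring), intervalIntegral.integral_const_mul]
    -- RHS conversion to 1-d integral
    have hR1 : ∫ x in Metric.ball (0 : EuclideanSpace ℝ (Fin N)) R, f (ubar x) * v x =
        ∫ x in Metric.ball (0 : EuclideanSpace ℝ (Fin N)) R,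
          (fun ρ : ℝ => f (u ρ) * g ρ) ‖x‖ := by
      refine setIntegral_congr_fun Metric.isOpen_ball.measurableSet (fun x hx => ?_)
      have hxR : ‖x‖ < R := mem_ball_zero_iff.1 hx
      rw [hueq x hxR.le]
    have hR2 : ∫ x in Metric.ball (0 : EuclideanSpace ℝ (Fin N)) R,
          (fun ρ : ℝ => f (u ρ) * g ρ) ‖x‖ =
        ∫ x : EuclideanSpace ℝ (Fin N), (fun ρ : ℝ => f (u ρ) * g ρ) ‖x‖ := by
      refine setIntegral_eq_integral_of_ae_compl_eq_zero
        (Filter.Eventually.of_forall fun x hx => ?_)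
      have hxR : R ≤ ‖x‖ := not_lt.1 (fun hc => hx (mem_ball_zero_iff.2 hc))
      dsimp only
      rw [hg0 ‖x‖ (by linarith), mul_zero]
    have hR3 : ∫ x : EuclideanSpace ℝ (Fin N), (fun ρ : ℝ => f (u ρ) * g ρ) ‖x‖ =
        N • (volume (Metric.ball (0 : EuclideanSpace ℝ (Fin N)) 1)).toReal •
          ∫ ρ in Ioi (0:ℝ), ρ ^ (N - 1) • (f (u ρ) * g ρ) := by
      have h5 := MeasureTheory.integral_fun_norm_addHaar
        (volume : Measure (EuclideanSpace ℝ (Fin N))) (fun ρ : ℝ => f (u ρ) * g ρ)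
      rwa [hdim] at h5
    have hR4 : ∫ ρ in Ioi (0:ℝ), ρ ^ (N - 1) • (f (u ρ) * g ρ) =
        ∫ t in (0:ℝ)..(r+ε), (f (u t) * t ^ (N-1)) * g t := by
      have hsub : Ioc (0:ℝ) (r+ε) ⊆ Ioi (0:ℝ) := fun x hx => hx.1
      have h1 : ∫ ρ in Ioi (0:ℝ), ρ ^ (N - 1) • (f (u ρ) * g ρ)
          = ∫ ρ in Ioc (0:ℝ) (r+ε), ρ ^ (N - 1) • (f (u ρ) * g ρ) :=
        setIntegral_eq_of_subset_of_forall_diff_eq_zero measurableSet_Ioi hsub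
          (fun x hx => by
            have hgt : r + ε < x := lt_of_not_ge (fun hle => hx.2 ⟨hx.1, hle⟩)
            rw [hg0 x hgt.le, mul_zero, smul_zero])
      rw [h1, ← intervalIntegral.integral_of_le (by have := hr.1; linarith : (0:ℝ) ≤ r + ε)]
      refine intervalIntegral.integral_congr fun t _ => ?_
      rw [smul_eq_mul]; ring
    -- combine
    rw [hL1, hL2, hL3, hL4] at heq
    rw [hR1, hR2, hR3, hR4] at heq
    have hc : ((N:ℝ) * (volume (Metric.ball (0 : EuclideanSpace ℝ (Fin N)) 1)).toReal) ≠ 0 :=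
      (mul_pos (Nat.cast_pos.2 hN) hvol).ne'
    rw [nsmul_eq_mul, smul_eq_mul, nsmul_eq_mul, smul_eq_mul] at heq
    apply mul_left_cancel₀ hc
    calc ((N:ℝ) * (volume (Metric.ball (0 : EuclideanSpace ℝ (Fin N)) 1)).toReal) *
          ((-ε⁻¹) * ∫ t in r..(r+ε), t ^ (N-1) * (φ |deriv u t| * deriv u t))
        = (N:ℝ) * ((volume (Metric.ball (0 : EuclideanSpace ℝ (Fin N)) 1)).toReal *
            ((-ε⁻¹) * ∫ t in r..(r+ε), t ^ (N-1) * (φ |deriv u t| * deriv u t))) := by ring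
      _ = lam * ((N:ℝ) * ((volume (Metric.ball (0 : EuclideanSpace ℝ (Fin N)) 1)).toReal *
            ∫ t in (0:ℝ)..(r+ε), (f (u t) * t ^ (N-1)) * g t)) := heq
      _ = ((N:ℝ) * (volume (Metric.ball (0 : EuclideanSpace ℝ (Fin N)) 1)).toReal) *
          (lam * ∫ t in (0:ℝ)..(r+ε), (f (u t) * t ^ (N-1)) * g t) := by ring
  -- limit as ε → 0⁺
  intro r hr
  set H : ℝ → ℝ := fun t => t ^ (N-1) * (φ |deriv u t| * deriv u t) with hHdef
  have hHr : ContinuousAt H r := hHcont.continuousAt (Ioo_mem_nhds hr.1 hr.2)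
  have hψ : HasDerivAt (fun s => ∫ t in r..s, H t) (H r) r := by
    refine intervalIntegral.integral_hasDerivAt_right ?_ ?_ hHr
    · exact IntervalIntegrable.refl
    · exact ⟨Ioo 0 R, Ioo_mem_nhds hr.1 hr.2,
        hHcont.aestronglyMeasurable measurableSet_Ioo⟩
  rw [hasDerivAt_iff_tendsto_slope] at hψ
  have hmap : Tendsto (fun ε : ℝ => r + ε) (𝓝[>] (0:ℝ)) (𝓝[≠] r) := by
    refine tendsto_nhdsWithin_of_tendsto_nhds_of_eventually_within _ ?_ ?_
    · have h2 : Tendsto (fun ε : ℝ => r + ε) (𝓝 (0:ℝ)) (𝓝 (r + 0)) :=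
        tendsto_const_nhds.add tendsto_id
      rw [add_zero] at h2
      exact h2.mono_left nhdsWithin_le_nhds
    · filter_upwards [self_mem_nhdsWithin] with ε (hε : ε ∈ Ioi (0:ℝ))
      have : (0:ℝ) < ε := hε
      simp only [mem_compl_singleton_iff]
      intro hc
      have : ε = 0 := by linarith [congrArg (fun z => z - r) hc]
      linarith
  have hlim1 : Tendsto (fun ε : ℝ => (-ε⁻¹) * ∫ t in r..(r+ε), H t)
      (𝓝[>] (0:ℝ)) (𝓝 (-(H r))) := by
    have h2 : Tendsto (fun ε : ℝ => slope (fun s => ∫ t in r..s, H t) r (r + ε))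
        (𝓝[>] (0:ℝ)) (𝓝 (H r)) := hψ.comp hmap
    have h3 : ∀ᶠ ε in 𝓝[>] (0:ℝ),
        slope (fun s => ∫ t in r..s, H t) r (r + ε) = ε⁻¹ * ∫ t in r..(r+ε), H t := by
      filter_upwards [self_mem_nhdsWithin] with ε (hε : ε ∈ Ioi (0:ℝ))
      rw [slope_def_field, intervalIntegral.integral_same, sub_zero,
        add_sub_cancel_left, div_eq_inv_mul]
    have h4 := h2.congr' h3
    have h5 := h4.neg
    refine h5.congr fun ε => by ring
  -- bound for the f-part
  have hcomp : ContinuousOn (fun t : ℝ => f (u t) * t ^ (N-1)) (Icc 0 R) :=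
    (hf.comp_continuousOn hucont).mul ((continuousOn_pow _))
  obtain ⟨M, hM⟩ := IsCompact.exists_bound_of_continuousOn isCompact_Icc hcomp
  have hM0 : 0 ≤ M := le_trans (norm_nonneg _) (hM 0 ⟨le_refl 0, hR.le⟩)
  have hsplit : ∀ ε : ℝ, 0 < ε → r + ε < R →
      (∫ t in (0:ℝ)..(r+ε), (f (u t) * t ^ (N-1)) * max 0 (min 1 ((r + ε - t)/ε)))
      = (∫ t in (0:ℝ)..r, f (u t) * t ^ (N-1)) +
        ∫ t in r..(r+ε), (f (u t) * t ^ (N-1)) * max 0 (min 1 ((r + ε - t)/ε)) := by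
    intro ε hε hεR
    have hgcont : Continuous (fun t : ℝ => max 0 (min 1 ((r + ε - t)/ε))) := by
      refine continuous_const.max (continuous_const.min ?_)
      fun_prop
    have hint : ∀ a b : ℝ, a ∈ Icc (0:ℝ) R → b ∈ Icc (0:ℝ) R →
        IntervalIntegrable (fun t : ℝ => (f (u t) * t ^ (N-1)) * max 0 (min 1 ((r + ε - t)/ε)))
          volume a b := by
      intro a b ha hb
      refine ContinuousOn.intervalIntegrable ?_
      refine (hcomp.mono ?_).mul hgcont.continuousOn
      exact Set.uIcc_subset_Icc ha hb
    have h6 := intervalIntegral.integral_add_adjacent_intervals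
      (hint 0 r ⟨le_refl 0, hR.le⟩ ⟨hr.1.le, hr.2.le⟩)
      (hint r (r+ε) ⟨hr.1.le, hr.2.le⟩ ⟨by linarith [hr.1], hεR.le⟩)
    rw [← h6]
    congr 1
    refine intervalIntegral.integral_congr fun t ht => ?_
    have ht' : t ∈ Icc (0:ℝ) r := by
      rwa [uIcc_of_le hr.1.le] at ht
    have hg1 : max 0 (min 1 ((r + ε - t)/ε)) = 1 := by
      have h1 : (1:ℝ) ≤ (r + ε - t)/ε := by
        rw [le_div_iff₀ hε]; have := ht'.2; linarith
      rw [min_eq_left h1, max_eq_right zero_le_one]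
    rw [hg1, mul_one]
  have hlim2 : Tendsto (fun ε : ℝ =>
      lam * ∫ t in (0:ℝ)..(r+ε), (f (u t) * t ^ (N-1)) * max 0 (min 1 ((r + ε - t)/ε)))
      (𝓝[>] (0:ℝ)) (𝓝 (lam * ∫ t in (0:ℝ)..r, f (u t) * t ^ (N-1))) := by
    have hS : Tendsto (fun ε : ℝ =>
        ∫ t in r..(r+ε), (f (u t) * t ^ (N-1)) * max 0 (min 1 ((r + ε - t)/ε)))
        (𝓝[>] (0:ℝ)) (𝓝 0) := by
      have hbound : ∀ᶠ ε in 𝓝[>] (0:ℝ),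
          ‖∫ t in r..(r+ε), (f (u t) * t ^ (N-1)) * max 0 (min 1 ((r + ε - t)/ε))‖ ≤ M * ε := by
        filter_upwards [Ioo_mem_nhdsGT_of_mem ⟨le_refl (0:ℝ), sub_pos.2 hr.2⟩]
          with ε hε
        have hε0 : (0:ℝ) < ε := hε.1
        have hεR : r + ε < R := by have := hε.2; linarith [sub_pos.2 hr.2]
        have h7 : ∀ t ∈ Set.uIoc r (r+ε),
            ‖(f (u t) * t ^ (N-1)) * max 0 (min 1 ((r + ε - t)/ε))‖ ≤ M := by
          intro t ht
          rw [uIoc_of_le (by linarith : r ≤ r + ε)] at ht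
          have ht1 : t ∈ Icc (0:ℝ) R := ⟨by have := ht.1; linarith [hr.1], by have := ht.2; linarith⟩
          have hg : |max 0 (min 1 ((r + ε - t)/ε))| ≤ 1 := by
            rw [abs_of_nonneg (le_max_left _ _)]
            exact max_le zero_le_one (min_le_left _ _)
          calc ‖(f (u t) * t ^ (N-1)) * max 0 (min 1 ((r + ε - t)/ε))‖
              = ‖f (u t) * t ^ (N-1)‖ * |max 0 (min 1 ((r + ε - t)/ε))| := by
                rw [norm_mul]; rfl
            _ ≤ M * 1 := mul_le_mul (hM t ht1) hg (abs_nonneg _) hM0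
            _ = M := mul_one M
        have h8 := intervalIntegral.norm_integral_le_of_norm_le_const h7
        calc ‖∫ t in r..(r+ε), (f (u t) * t ^ (N-1)) * max 0 (min 1 ((r + ε - t)/ε))‖
            ≤ M * |r + ε - r| := h8
          _ = M * ε := by rw [show r + ε - r = ε by ring, abs_of_pos hε0]
      have hMε : Tendsto (fun ε : ℝ => M * ε) (𝓝[>] (0:ℝ)) (𝓝 0) := by
        have h9 : Tendsto (fun ε : ℝ => M * ε) (𝓝 (0:ℝ)) (𝓝 (M * 0)) :=
          tendsto_const_nhds.mul tendsto_id
        rw [mul_zero] at h9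
        exact h9.mono_left nhdsWithin_le_nhds
      exact squeeze_zero_norm' hbound hMε
    have h10 : Tendsto (fun ε : ℝ =>
        (∫ t in (0:ℝ)..r, f (u t) * t ^ (N-1)) +
          ∫ t in r..(r+ε), (f (u t) * t ^ (N-1)) * max 0 (min 1 ((r + ε - t)/ε)))
        (𝓝[>] (0:ℝ)) (𝓝 ((∫ t in (0:ℝ)..r, f (u t) * t ^ (N-1)) + 0)) :=
      tendsto_const_nhds.add hS
    rw [add_zero] at h10
    have h11 : ∀ᶠ ε in 𝓝[>] (0:ℝ),
        (∫ t in (0:ℝ)..r, f (u t) * t ^ (N-1)) +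
          (∫ t in r..(r+ε), (f (u t) * t ^ (N-1)) * max 0 (min 1 ((r + ε - t)/ε)))
        = ∫ t in (0:ℝ)..(r+ε), (f (u t) * t ^ (N-1)) * max 0 (min 1 ((r + ε - t)/ε)) := by
      filter_upwards [Ioo_mem_nhdsGT_of_mem ⟨le_refl (0:ℝ), sub_pos.2 hr.2⟩] with ε hε
      rw [hsplit ε hε.1 (by have := hε.2; linarith)]
    exact ((h10.congr' h11).const_mul lam)
  -- conclude by uniqueness of limits
  have hfin : ∀ᶠ ε in 𝓝[>] (0:ℝ),
      (-ε⁻¹) * ∫ t in r..(r+ε), H t =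
      lam * ∫ t in (0:ℝ)..(r+ε), (f (u t) * t ^ (N-1)) * max 0 (min 1 ((r + ε - t)/ε)) := by
    filter_upwards [Ioo_mem_nhdsGT_of_mem ⟨le_refl (0:ℝ), sub_pos.2 hr.2⟩] with ε hε
    exact key r hr ε hε.1 (by have := hε.2; linarith)
  have := tendsto_nhds_unique (hlim1.congr' hfin) hlim2
  rw [hHdef] at this
  simpa using this
end

section
/- Let R > 0, N ≥ 1, λ > 0, let f : ℝ → ℝ be continuous with f(s) ≤ 0 for s ∈ [a₁, b₁], where 0 < a₁ < b₁, and let u ∈ C¹([0,R]) satisfy u(R) = 0 and −r^{N−1} φ(|u′(r)|) u′(r) = λ ∫₀^r f(u(t)) t^{N−1} dt for all r ∈ (0,R). Suppose u attains its maximum at some r₀ ∈ [0,R) with u(r₀) = ‖u‖_∞ > a₁. Then ‖u‖_∞ > b₁. -/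
open MeasureTheory Set Filter
open scoped Topology

/-- Claim: if the radial profile `u` attains its maximum `‖u‖_∞ > a₁` at `r₀` and `f ≤ 0`
on `[a₁, b₁]`, then `‖u‖_∞ > b₁`. -/
theorem sup_norm_beyond_b1
    (R : ℝ) (hR : 0 < R) (N : ℕ) (hN : 1 ≤ N) (lam : ℝ) (hlam : 0 < lam)
    (φ : ℝ → ℝ) (hφcont : ContinuousOn φ (Ioi 0)) (hφpos : ∀ t > 0, 0 < φ t)
    (hφ2 : StrictMonoOn (fun t => t * φ t) (Ioi 0))
    (f : ℝ → ℝ) (hf : Continuous f)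
    (a₁ b₁ : ℝ) (ha₁ : 0 < a₁) (hab : a₁ < b₁)
    (hfneg : ∀ s ∈ Icc a₁ b₁, f s ≤ 0)
    (u : ℝ → ℝ) (hu : ContDiffOn ℝ 1 u (Icc 0 R)) (huR : u R = 0)
    (hode : ∀ r ∈ Ioo (0 : ℝ) R,
      -(r ^ (N - 1) * (φ |deriv u r| * deriv u r)) =
        lam * ∫ t in (0 : ℝ)..r, f (u t) * t ^ (N - 1))
    (r₀ : ℝ) (hr₀ : r₀ ∈ Ico 0 R) (hmax : ∀ r ∈ Icc 0 R, u r ≤ u r₀)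
    (hgt : a₁ < u r₀) :
    b₁ < u r₀ := by
  by_contra hle
  push_neg at hle
  obtain ⟨hr₀0, hr₀R⟩ := hr₀
  have hucont : ContinuousOn u (Icc 0 R) := hu.continuousOn
  -- the set where u drops to a₁
  set S : Set ℝ := Icc r₀ R ∩ u ⁻¹' (Iic a₁) with hS
  have hSne : S.Nonempty := ⟨R, ⟨hr₀R.le, le_rfl⟩, by simp [huR, ha₁.le]⟩
  have hSbdd : BddBelow S := ⟨r₀, fun x hx => hx.1.1⟩
  have hSclosed : IsClosed S :=
    (hucont.mono (Icc_subset_Icc hr₀0 le_rfl)).preimage_isClosed_of_isClosed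
      isClosed_Icc isClosed_Iic
  obtain ⟨r₁, hr₁def⟩ : ∃ x : ℝ, sInf S = x := ⟨_, rfl⟩
  have hr₁S : r₁ ∈ S := hr₁def ▸ hSclosed.csInf_mem hSne hSbdd
  have hr₁R : r₁ ≤ R := hr₁S.1.2
  have hur₁ : u r₁ ≤ a₁ := hr₁S.2
  have hr₀r₁ : r₀ < r₁ := lt_of_le_of_ne hr₁S.1.1 (by
    rintro rfl
    exact absurd hur₁ (not_le.mpr hgt))
  -- points strictly before r₁ (and ≥ r₀) have u > a₁
  have hbefore : ∀ t ∈ Icc r₀ R, t < r₁ → a₁ < u t := by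
    intro t ht htlt
    by_contra h
    push_neg at h
    exact absurd (hr₁def ▸ csInf_le hSbdd ⟨ht, h⟩) (not_le.mpr htlt)
  -- the integrand
  set g : ℝ → ℝ := fun t => f (u t) * t ^ (N - 1) with hg
  have hgcont : ContinuousOn g (Icc 0 R) :=
    (hf.comp_continuousOn hucont).mul (continuous_pow (N - 1)).continuousOn
  have hgint : ∀ a b : ℝ, a ∈ Icc (0:ℝ) R → b ∈ Icc (0:ℝ) R →
      IntervalIntegrable g MeasureTheory.volume a b := by
    intro a b ha hb
    exact (hgcont.mono (fun x hx => by
      rcases Set.uIcc_subset_Icc ha hb hx with h; exact h)).intervalIntegrable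
  -- the integral up to r₀ vanishes
  have hI₀ : (∫ t in (0:ℝ)..r₀, g t) = 0 := by
    rcases eq_or_lt_of_le hr₀0 with h0 | h0
    · rw [← h0, intervalIntegral.integral_same]
    · have hmem : r₀ ∈ Ioo (0:ℝ) R := ⟨h0, hr₀R⟩
      have hloc : IsLocalMax u r₀ :=
        Filter.eventually_of_mem (Icc_mem_nhds h0 hr₀R) hmax
      have hderiv0 : deriv u r₀ = 0 := hloc.deriv_eq_zero
      have := hode r₀ hmem
      rw [hderiv0] at this
      simp only [mul_zero, neg_zero] at this
      exact (mul_eq_zero.mp this.symm).resolve_left (ne_of_gt hlam)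
  -- derivative is nonnegative on (r₀, r₁)
  have hderiv_nonneg : ∀ r ∈ Ioo r₀ r₁, 0 ≤ deriv u r := by
    intro r hr
    have hr0 : 0 < r := lt_of_le_of_lt hr₀0 hr.1
    have hrR : r < R := lt_of_lt_of_le hr.2 hr₁R
    have hrIcc : r ∈ Icc (0:ℝ) R := ⟨hr0.le, hrR.le⟩
    -- ∫₀^r g = ∫₀^{r₀} g + ∫_{r₀}^r g = ∫_{r₀}^r g ≤ 0
    have hsplit : (∫ t in (0:ℝ)..r, g t) =
        (∫ t in (0:ℝ)..r₀, g t) + ∫ t in r₀..r, g t :=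
      (intervalIntegral.integral_add_adjacent_intervals
        (hgint 0 r₀ ⟨le_rfl, hR.le⟩ ⟨hr₀0, hr₀R.le⟩)
        (hgint r₀ r ⟨hr₀0, hr₀R.le⟩ hrIcc)).symm
    have hnegint : (∫ t in r₀..r, g t) ≤ 0 := by
      have : (0:ℝ) ≤ ∫ t in r₀..r, -g t := by
        apply intervalIntegral.integral_nonneg hr.1.le
        intro t ht
        have ht0 : 0 ≤ t := le_trans hr₀0 ht.1
        have htR : t ∈ Icc (0:ℝ) R := ⟨ht0, le_trans ht.2 hrR.le⟩
        have hta : a₁ < u t := hbefore t ⟨ht.1, htR.2⟩ (lt_of_le_of_lt ht.2 hr.2)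
        have htb : u t ≤ b₁ := le_trans (hmax t htR) hle
        have hfle : f (u t) ≤ 0 := hfneg (u t) ⟨hta.le, htb⟩
        simp only [hg, neg_mul, neg_nonneg] at *
        exact mul_nonpos_of_nonpos_of_nonneg hfle (pow_nonneg ht0 _)
      rw [intervalIntegral.integral_neg] at this
      linarith
    have hIle : (∫ t in (0:ℝ)..r, g t) ≤ 0 := by rw [hsplit, hI₀, zero_add]; exact hnegint
    have hOde := hode r ⟨hr0, hrR⟩
    have hPnn : 0 ≤ φ |deriv u r| * deriv u r := by
      have hpow : 0 < r ^ (N - 1) := pow_pos hr0 _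
      nlinarith [mul_nonpos_of_nonneg_of_nonpos hlam.le hIle]
    by_contra hneg
    push_neg at hneg
    have habs : 0 < |deriv u r| := abs_pos.mpr (ne_of_lt hneg)
    have := mul_neg_of_pos_of_neg (hφpos _ habs) hneg
    linarith
  -- u is monotone on [r₀, r₁]
  have hmono : MonotoneOn u (Icc r₀ r₁) := by
    apply monotoneOn_of_deriv_nonneg (convex_Icc r₀ r₁)
      (hucont.mono (Icc_subset_Icc hr₀0 hr₁R))
    · rw [interior_Icc]
      intro x hx
      have hx' : x ∈ Ioo (0:ℝ) R := ⟨lt_of_le_of_lt hr₀0 hx.1, lt_of_lt_of_le hx.2 hr₁R⟩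
      exact ((hu.differentiableOn one_ne_zero).differentiableAt
        (Icc_mem_nhds hx'.1 hx'.2)).differentiableWithinAt
    · rw [interior_Icc]; exact hderiv_nonneg
  have : u r₀ ≤ u r₁ := hmono ⟨le_rfl, hr₀r₁.le⟩ ⟨hr₀r₁.le, le_rfl⟩ hr₀r₁.le
  linarith
end

section
/- Let R > 0, N ≥ 1, λ > 0, let φ : (0,∞) → (0,∞) be C¹ with (tφ(t))′ > 0 for t > 0, let f : ℝ → ℝ be continuous, and let u ∈ C¹((0,R)) satisfy −r^{N−1} φ(|u′(r)|) u′(r) = λ ∫₀^r f(u(t)) t^{N−1} dt for all r ∈ (0,R). Then u is twice continuously differentiable on the open set O = {r ∈ (0,R) : u′(r) ≠ 0}. -/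
open MeasureTheory Set Filter
open scoped Topology

/-- Claim: the radial profile `u` is `C²` on the open set `O = {r ∈ (0,R) : u'(r) ≠ 0}`. -/
theorem radial_profile_C2
    (R : ℝ) (hR : 0 < R) (N : ℕ) (hN : 1 ≤ N) (lam : ℝ) (hlam : 0 < lam)
    (φ : ℝ → ℝ) (hφC1 : ContDiffOn ℝ 1 φ (Ioi 0)) (hφpos : ∀ t > 0, 0 < φ t)
    (hφ' : ∀ t > 0, 0 < deriv (fun s => s * φ s) t)
    (f : ℝ → ℝ) (hf : Continuous f)
    (u : ℝ → ℝ) (hu : ContDiffOn ℝ 1 u (Ioo 0 R))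
    (hode : ∀ r ∈ Ioo (0 : ℝ) R,
      -(r ^ (N - 1) * (φ |deriv u r| * deriv u r)) =
        lam * ∫ t in (0 : ℝ)..r, f (u t) * t ^ (N - 1)) :
    ContDiffOn ℝ 2 u {r ∈ Ioo (0 : ℝ) R | deriv u r ≠ 0} := by
  -- notation
  set h : ℝ → ℝ := fun t => f (u t) * t ^ (N - 1) with hh
  set g : ℝ → ℝ := fun s => φ |s| * s with hgdef
  set G : ℝ → ℝ := fun r => ∫ t in (0 : ℝ)..r, h t with hG
  have hcont : ContinuousOn h (Ioo 0 R) := by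
    exact ((hf.comp_continuousOn (hu.continuousOn)).mul
      (continuousOn_pow _ |>.mono (subset_univ _)))
  have hgne : ∀ c : ℝ, c ≠ 0 → g c ≠ 0 := by
    intro c hc
    rcases hc.lt_or_gt with hlt | hgt
    · have hp : 0 < φ |c| := hφpos _ (abs_pos.mpr hc)
      exact ne_of_lt (mul_neg_of_pos_of_neg hp hlt)
    · have hp : 0 < φ |c| := hφpos _ (abs_pos.mpr hc)
      exact ne_of_gt (mul_pos hp hgt)
  -- the set O is open
  have hderivCont : ContinuousOn (deriv u) (Ioo 0 R) :=
    hu.continuousOn_deriv_of_isOpen isOpen_Ioo le_rfl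
  have hOeq : {r ∈ Ioo (0 : ℝ) R | deriv u r ≠ 0} = Ioo 0 R ∩ (deriv u) ⁻¹' ({0}ᶜ) := by
    ext r; simp [mem_setOf_eq]
  have hO : IsOpen {r ∈ Ioo (0 : ℝ) R | deriv u r ≠ 0} := by
    rw [hOeq]
    exact hderivCont.isOpen_inter_preimage isOpen_Ioo (isOpen_compl_singleton)
  -- key pointwise claim
  have key : ∀ r₀ ∈ {r ∈ Ioo (0 : ℝ) R | deriv u r ≠ 0}, ContDiffAt ℝ 1 (deriv u) r₀ := by
    rintro r₀ ⟨hr₀, hdu⟩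
    set c : ℝ := deriv u r₀ with hc
    -- step 1 : integrability on [0, r₀]
    have hint0 : IntervalIntegrable h volume 0 r₀ := by
      by_contra hni
      have h0 : (∫ t in (0:ℝ)..r₀, h t) = 0 := intervalIntegral.integral_undef hni
      have hode0 := hode r₀ hr₀
      rw [show (∫ t in (0:ℝ)..r₀, f (u t) * t ^ (N-1)) = ∫ t in (0:ℝ)..r₀, h t from rfl,
        h0, mul_zero] at hode0
      have hpow : (0:ℝ) < r₀ ^ (N-1) := pow_pos hr₀.1 _
      have : φ |deriv u r₀| * deriv u r₀ = 0 :=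
        (mul_eq_zero.mp (neg_eq_zero.mp hode0)).resolve_left (ne_of_gt hpow)
      exact hgne _ hdu this
    -- neighborhood U
    set a : ℝ := r₀ / 2 with ha
    set b : ℝ := (r₀ + R) / 2 with hb
    have ha0 : 0 < a := by simp [ha]; linarith [hr₀.1]
    have har : a < r₀ := by simp [ha]; linarith [hr₀.1]
    have hrb : r₀ < b := by simp [hb]; linarith [hr₀.2]
    have hbR : b < R := by simp [hb]; linarith [hr₀.2]
    set U : Set ℝ := Ioo a b with hU
    have hr₀U : r₀ ∈ U := ⟨har, hrb⟩
    have hUsub : U ⊆ Ioo 0 R := fun x hx => ⟨lt_trans ha0 hx.1, lt_trans hx.2 hbR⟩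
    have hcontU : ContinuousOn h U := hcont.mono hUsub
    have hintr : ∀ r ∈ U, IntervalIntegrable h volume r₀ r := by
      intro r hr
      apply ContinuousOn.intervalIntegrable
      apply hcont.mono
      exact (Set.ordConnected_Ioo).uIcc_subset (hUsub hr₀U) (hUsub hr)
    have hGsplit : ∀ r ∈ U, G r = G r₀ + ∫ t in r₀..r, h t := fun r hr =>
      (intervalIntegral.integral_add_adjacent_intervals hint0 (hintr r hr)).symm
    have hGd : ∀ r ∈ U, HasDerivAt G (h r) r := by
      intro r hr
      have hca : ContinuousAt h r := hcontU.continuousAt (isOpen_Ioo.mem_nhds hr)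
      have hm : StronglyMeasurableAtFilter h (𝓝 r) :=
        hcontU.stronglyMeasurableAtFilter isOpen_Ioo r hr
      have h1 : HasDerivAt (fun s => G r₀ + ∫ t in r₀..s, h t) (h r) r :=
        (intervalIntegral.integral_hasDerivAt_right (hintr r hr) hm hca).const_add (G r₀)
      apply h1.congr_of_eventuallyEq
      filter_upwards [isOpen_Ioo.mem_nhds hr] with s hs
      exact hGsplit s hs
    -- G is C¹ on U
    have hGC1 : ContDiffOn ℝ 1 G U := by
      rw [show (1 : WithTop ℕ∞) = 0 + 1 from rfl, contDiffOn_succ_iff_deriv_of_isOpen isOpen_Ioo]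
      refine ⟨fun r hr => (hGd r hr).differentiableAt.differentiableWithinAt, by simp, ?_⟩
      rw [contDiffOn_zero]
      exact hcontU.congr fun r hr => (hGd r hr).deriv
    -- F is C¹ at r₀
    set F : ℝ → ℝ := fun r => -(lam * G r) / r ^ (N - 1) with hF
    have hpowr₀ : (r₀ : ℝ) ^ (N - 1) ≠ 0 := ne_of_gt (pow_pos hr₀.1 _)
    have hFC1 : ContDiffAt ℝ 1 F r₀ := by
      apply ContDiffAt.div
      · exact (contDiffAt_const.mul (hGC1.contDiffAt (isOpen_Ioo.mem_nhds hr₀U))).neg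
      · exact contDiffAt_id.pow _
      · exact hpowr₀
    -- the ODE as an equation g (u' r) = F r near r₀
    have heq : ∀ᶠ r in 𝓝 r₀, g (deriv u r) = F r := by
      filter_upwards [isOpen_Ioo.mem_nhds hr₀] with r hr
      have hpow : (r : ℝ) ^ (N - 1) ≠ 0 := ne_of_gt (pow_pos hr.1 _)
      rw [hF]; rw [eq_div_iff hpow]
      have := hode r hr
      rw [show (∫ t in (0:ℝ)..r, f (u t) * t ^ (N-1)) = G r from rfl] at this
      rw [hgdef]
      linear_combination -this
    -- properties of g near c
    have hP : ContDiffOn ℝ 1 (fun s => s * φ s) (Ioi 0) := contDiffOn_id.mul hφC1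
    obtain ⟨d, hdpos, hgc, hgd⟩ : ∃ d, 0 < d ∧ ContDiffAt ℝ 1 g c ∧ HasDerivAt g d c := by
      rcases hdu.lt_or_gt with hneg | hpos
      · -- c < 0
        have hev : (fun s => -(-s * φ (-s))) =ᶠ[𝓝 c] g := by
          filter_upwards [Iio_mem_nhds hneg] with s hs
          rw [hgdef]; simp only []; rw [abs_of_neg hs]; ring
        have hPat : ContDiffAt ℝ 1 (fun s => s * φ s) (-c) :=
          hP.contDiffAt (Ioi_mem_nhds (by linarith))
        have hQ : ContDiffAt ℝ 1 (fun s => -(-s * φ (-s))) c := by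
          have := (hPat.comp c (contDiffAt_id.neg)).neg
          simpa [Function.comp] using this
        have hPd : HasDerivAt (fun s => s * φ s) (deriv (fun s => s * φ s) (-c)) (-c) :=
          (hPat.differentiableAt one_ne_zero).hasDerivAt
        have hQd : HasDerivAt (fun s => -(-s * φ (-s))) (deriv (fun s => s * φ s) (-c)) c := by
          have h2 := (hPd.comp c ((hasDerivAt_id c).neg))
          have h3 := h2.neg
          simp only [Function.comp_def, Pi.neg_def, id] at h3
          exact h3.congr_deriv (by ring)
        exact ⟨_, hφ' (-c) (by linarith), hQ.congr_of_eventuallyEq hev.symm,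
          hQd.congr_of_eventuallyEq hev.symm⟩
      · -- c > 0
        have hev : (fun s => s * φ s) =ᶠ[𝓝 c] g := by
          filter_upwards [Ioi_mem_nhds hpos] with s hs
          rw [hgdef]; simp only []; rw [abs_of_pos hs]; ring
        have hPat : ContDiffAt ℝ 1 (fun s => s * φ s) c := hP.contDiffAt (Ioi_mem_nhds hpos)
        have hPd : HasDerivAt (fun s => s * φ s) (deriv (fun s => s * φ s) c) c :=
          (hPat.differentiableAt one_ne_zero).hasDerivAt
        exact ⟨_, hφ' c hpos, hPat.congr_of_eventuallyEq hev.symm,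
          hPd.congr_of_eventuallyEq hev.symm⟩
    -- inverse function theorem
    have hd0 : d ≠ 0 := ne_of_gt hdpos
    have hfd : HasFDerivAt g
        ((ContinuousLinearEquiv.unitsEquivAut ℝ (Units.mk0 d hd0)) : ℝ →L[ℝ] ℝ) c :=
      hgd.hasFDerivAt_equiv hd0
    have hinv : ContDiffAt ℝ 1 (hgc.localInverse hfd one_ne_zero) (g c) :=
      hgc.to_localInverse hfd one_ne_zero
    have hleft : ∀ᶠ x in 𝓝 c, hgc.localInverse hfd one_ne_zero (g x) = x :=
      (hgc.hasStrictFDerivAt' hfd one_ne_zero).eventually_left_inverse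
    have hcv : ContinuousAt (deriv u) r₀ :=
      (hderivCont.continuousAt (isOpen_Ioo.mem_nhds hr₀))
    have hev2 : deriv u =ᶠ[𝓝 r₀] fun r => hgc.localInverse hfd one_ne_zero (F r) := by
      filter_upwards [hcv.eventually hleft, heq] with r h1 h2
      rw [← h2, h1]
    have hFr₀ : F r₀ = g c := (heq.self_of_nhds).symm
    have hinv' : ContDiffAt ℝ 1 (hgc.localInverse hfd one_ne_zero) (F r₀) := by
      rw [hFr₀]; exact hinv
    have : ContDiffAt ℝ 1 (fun r => hgc.localInverse hfd one_ne_zero (F r)) r₀ :=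
      hinv'.comp r₀ hFC1
    exact this.congr_of_eventuallyEq hev2
  -- conclude
  rw [show (2 : WithTop ℕ∞) = 1 + 1 from rfl, contDiffOn_succ_iff_deriv_of_isOpen hO]
  refine ⟨?_, by simp, fun r hr => (key r hr).contDiffWithinAt⟩
  exact (hu.differentiableOn one_ne_zero).mono fun r hr => hr.1
end

section
/- Let φ : (0,∞) → (0,∞) be a C¹ function and define α : ℝ^N \ {0} → ℝ^N by α_j(η) = φ(|η|)η_j. Suppose there are constants Γ₁, Γ₂ > 0 such that for all η ≠ 0 and all ξ ∈ ℝ^N: Σ_{i,j=1}^N (∂α_j/∂η_i)(η) ξ_i ξ_j ≥ Γ₁ φ(|η|)|ξ|² and |Σ_{i,j=1}^N (∂α_j/∂η_i)(η)| ≤ Γ₂ φ(|η|). Then Γ₁ ≤ (tφ(t))′/φ(t) ≤ Γ₂ for all t > 0. -/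
open MeasureTheory Set Filter
open scoped Topology

theorem my_hasFDerivAt_norm {F : Type*} [NormedAddCommGroup F] [InnerProductSpace ℝ F]
    {η : F} (hη : η ≠ 0) :
    HasFDerivAt (fun y : F => ‖y‖) ((‖η‖⁻¹ : ℝ) • innerSL ℝ η) η := by
  have h1 : HasFDerivAt (fun y : F => ‖y‖ ^ 2) (2 • (innerSL ℝ η)) η :=
    (hasStrictFDerivAt_norm_sq η).hasFDerivAt
  have hn : (0:ℝ) < ‖η‖ := norm_pos_iff.mpr hη
  have h2 : HasDerivAt Real.sqrt (1 / (2 * Real.sqrt (‖η‖ ^ 2))) (‖η‖ ^ 2) :=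
    Real.hasDerivAt_sqrt (by positivity)
  have h3 := h2.comp_hasFDerivAt η h1
  have heq : (fun y : F => Real.sqrt (‖y‖ ^ 2)) = fun y : F => ‖y‖ := by
    funext y; rw [Real.sqrt_sq (norm_nonneg y)]
  rw [show (Real.sqrt ∘ fun y : F => ‖y‖ ^ 2) = fun y : F => ‖y‖ from heq] at h3
  refine h3.congr_fderiv (Eq.symm ?_)
  rw [Real.sqrt_sq (norm_nonneg η)]
  ext v
  simp [smul_smul]
  ring

/-- Proposition 5.1: conditions (φ₃)-(φ₄) imply `Γ₁ ≤ (tφ(t))'/φ(t) ≤ Γ₂` for `t > 0`. -/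
theorem phi34_implies_quotient_bounds
    {N : ℕ} (hN : 0 < N)
    (φ : ℝ → ℝ) (hφC1 : ContDiffOn ℝ 1 φ (Ioi 0)) (hφpos : ∀ t > 0, 0 < φ t)
    (Γ₁ Γ₂ : ℝ) (hΓ₁ : 0 < Γ₁) (hΓ₂ : 0 < Γ₂)
    (hφ3 : ∀ η : EuclideanSpace ℝ (Fin N), η ≠ 0 → ∀ ξ : EuclideanSpace ℝ (Fin N),
      Γ₁ * φ ‖η‖ * ‖ξ‖ ^ 2 ≤
        ∑ i, ∑ j, (fderiv ℝ (fun y : EuclideanSpace ℝ (Fin N) => (φ ‖y‖) • y) η)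
          (EuclideanSpace.single i (1 : ℝ)) j * ξ i * ξ j)
    (hφ4 : ∀ η : EuclideanSpace ℝ (Fin N), η ≠ 0 →
      |∑ i, ∑ j, (fderiv ℝ (fun y : EuclideanSpace ℝ (Fin N) => (φ ‖y‖) • y) η)
          (EuclideanSpace.single i (1 : ℝ)) j| ≤ Γ₂ * φ ‖η‖) :
    ∀ t > (0 : ℝ),
      Γ₁ ≤ deriv (fun s => s * φ s) t / φ t ∧
      deriv (fun s => s * φ s) t / φ t ≤ Γ₂ := by
  intro t ht
  set c := deriv φ t with hc
  have hφdiff : DifferentiableAt ℝ φ t :=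
    ((hφC1.differentiableOn one_ne_zero).differentiableAt (Ioi_mem_nhds ht))
  have hφ' : HasDerivAt φ c t := hφdiff.hasDerivAt
  haveI : NeZero N := ⟨hN.ne'⟩
  set i₀ : Fin N := ⟨0, hN⟩ with hi₀
  set e : EuclideanSpace ℝ (Fin N) := EuclideanSpace.single i₀ (1:ℝ) with he
  set η : EuclideanSpace ℝ (Fin N) := t • e with hη
  have hnorme : ‖e‖ = 1 := by simp [he, EuclideanSpace.norm_single]
  have hnormη : ‖η‖ = t := by
    rw [hη, norm_smul, hnorme, Real.norm_eq_abs, abs_of_pos ht, mul_one]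
  have hηne : η ≠ 0 := by
    intro h; rw [← norm_eq_zero] at h; rw [hnormη] at h; exact ht.ne' h
  have hnormd := my_hasFDerivAt_norm hηne
  have hcomp : HasFDerivAt (fun y : EuclideanSpace ℝ (Fin N) => φ ‖y‖)
      (c • ((‖η‖⁻¹ : ℝ) • innerSL ℝ η)) η := by
    exact (hnormη ▸ hφ' : HasDerivAt φ c ‖η‖).comp_hasFDerivAt η hnormd
  set L : EuclideanSpace ℝ (Fin N) →L[ℝ] EuclideanSpace ℝ (Fin N) :=
    φ ‖η‖ • ContinuousLinearMap.id ℝ _ + (c • ((‖η‖⁻¹ : ℝ) • innerSL ℝ η)).smulRight η with hL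
  have hg : HasFDerivAt (fun y : EuclideanSpace ℝ (Fin N) => (φ ‖y‖) • y) L η := by
    have := hcomp.smul (hasFDerivAt_id η)
    exact this
  have hfd : fderiv ℝ (fun y : EuclideanSpace ℝ (Fin N) => (φ ‖y‖) • y) η = L := hg.fderiv
  have hentry : ∀ i j : Fin N, L (EuclideanSpace.single i 1) j =
      (if j = i then φ t else 0) + (if i = i₀ ∧ j = i₀ then t * c else 0) := by
    intro i j
    rw [hL, hnormη]
    simp [hL, hnormη, ContinuousLinearMap.smul_apply, ContinuousLinearMap.smulRight_apply,
      hη, he, EuclideanSpace.inner_single_left, EuclideanSpace.single_apply, real_inner_smul_left]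
    rcases eq_or_ne i i₀ with h | h <;> rcases eq_or_ne j i₀ with h' | h' <;>
      simp [h, h', @eq_comm _ i₀ i, EuclideanSpace.single_apply, inv_mul_cancel₀ ht.ne']
    ring
  have hsum1 : ∑ i, ∑ j, L (EuclideanSpace.single i 1) j * e i * e j = φ t + t * c := by
    simp only [hentry, he, EuclideanSpace.single_apply]
    rw [Finset.sum_eq_single i₀]
    · rw [Finset.sum_eq_single i₀] <;> simp +contextual
    · intro b _ hb
      rw [Finset.sum_eq_zero]
      intro j _
      simp [hb]
    · simp
  have hsum2 : ∑ i, ∑ j, L (EuclideanSpace.single i 1) j = N * φ t + t * c := by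
    simp only [hentry, Finset.sum_add_distrib]
    simp [Finset.sum_ite_eq, ite_and, Finset.card_univ, mul_comm]
  have hlow : Γ₁ * φ t ≤ φ t + t * c := by
    have h3 := hφ3 η hηne e
    rw [hfd, hnormη, hnorme] at h3
    simpa [hsum1] using h3
  have hhigh : φ t + t * c ≤ Γ₂ * φ t := by
    have h4 := hφ4 η hηne
    rw [hfd, hnormη, hsum2] at h4
    have h4' : (N : ℝ) * φ t + t * c ≤ Γ₂ * φ t := (abs_le.mp h4).2
    have hN1 : (1 : ℝ) ≤ N := by exact_mod_cast hN
    nlinarith [hφpos t ht]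
  have hderiv : deriv (fun s => s * φ s) t = φ t + t * c := by
    have : HasDerivAt (fun s => s * φ s) (1 * φ t + t * c) t :=
      (hasDerivAt_id t).mul hφ'
    rw [this.deriv]; ring
  have hφt : 0 < φ t := hφpos t ht
  rw [hderiv]
  constructor
  · rw [le_div_iff₀ hφt]; linarith
  · rw [div_le_iff₀ hφt]; linarith
end

section
/- Let p ≥ 1 and φ(t) = (p t^{p−2}(1 + t)ln(1 + t) + t^{p−1})/(1 + t) for t > 0. Then ∫₀^t s φ(s) ds = t^p ln(1 + t) for all t ≥ 0, (tφ(t))′ = t^{p−2}[p(p−1)ln(1+t) + 2pt/(1+t) − t²/(1+t)²] for t > 0, and p − 1 ≤ (tφ(t))′/φ(t) ≤ p for all t > 0. -/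
open Set Filter Real
open scoped Topology

private lemma log_ge_aux (t : ℝ) (ht : 0 ≤ t) : t / (1 + t) ≤ Real.log (1 + t) := by
  have h1t : (0:ℝ) < 1 + t := by linarith
  have h := Real.log_le_sub_one_of_pos (show (0:ℝ) < (1+t)⁻¹ by positivity)
  rw [Real.log_inv] at h
  have h2 : (1+t)⁻¹ - 1 = -(t/(1+t)) := by field_simp; ring
  linarith [h2 ▸ h]

private lemma auxDeriv (p t : ℝ) (ht : 0 < t) :
    HasDerivAt (fun s : ℝ => p * s ^ (p-1) * Real.log (1+s) + s ^ p / (1+s))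
      (t ^ (p-2) * (p*(p-1)*Real.log (1+t) + 2*p*t/(1+t) - t^2/(1+t)^2)) t := by
  have h1t : (0:ℝ) < 1 + t := by linarith
  have h1 : HasDerivAt (fun s : ℝ => s ^ (p-1)) ((p-1) * t ^ (p-1-1)) t :=
    Real.hasDerivAt_rpow_const (Or.inl ht.ne')
  have h2 : HasDerivAt (fun s : ℝ => Real.log (1+s)) (1/(1+t)) t := by
    have h4 : HasDerivAt (fun s : ℝ => 1 + s) 1 t := (hasDerivAt_id t).const_add 1
    simpa using h4.log h1t.ne'
  have h3 : HasDerivAt (fun s : ℝ => s ^ p) (p * t ^ (p-1)) t :=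
    Real.hasDerivAt_rpow_const (Or.inl ht.ne')
  have h4 : HasDerivAt (fun s : ℝ => 1 + s) 1 t := (hasDerivAt_id t).const_add 1
  have h := ((h1.const_mul p).mul h2).add (h3.div h4 h1t.ne')
  refine h.congr_deriv ?_
  have e1 : t ^ (p-1) = t ^ (p-2) * t := by
    rw [show p - 1 = p - 2 + 1 by ring, Real.rpow_add_one ht.ne']
  have e2 : t ^ p = t ^ (p-2) * t * t := by
    rw [show t ^ (p-2) * t * t = t ^ (p-2) * t ^ (1:ℝ) * t ^ (1:ℝ) by rw [Real.rpow_one],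
      ← Real.rpow_add ht, ← Real.rpow_add ht, show p - 2 + 1 + 1 = p by ring]
  rw [show p-1-1 = p-2 by ring, e1, e2]
  field_simp
  ring

private lemma auxDerivF (p x : ℝ) (hx : 0 < x) :
    HasDerivAt (fun s : ℝ => s ^ p * Real.log (1+s))
      (p * x ^ (p-1) * Real.log (1+x) + x ^ p / (1+x)) x := by
  have h1x : (0:ℝ) < 1 + x := by linarith
  have h2 : HasDerivAt (fun s : ℝ => Real.log (1+s)) (1/(1+x)) x := by
    have h4 : HasDerivAt (fun s : ℝ => 1 + s) 1 x := (hasDerivAt_id x).const_add 1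
    simpa using h4.log h1x.ne'
  have h3 : HasDerivAt (fun s : ℝ => s ^ p) (p * x ^ (p-1)) x :=
    Real.hasDerivAt_rpow_const (Or.inl hx.ne')
  have h := h3.mul h2
  refine h.congr_deriv ?_
  ring

/-- Example: for `φ(t) = (p t^{p-2}(1+t)ln(1+t) + t^{p-1})/(1+t)` with `p ≥ 1`, the
primitive is `Φ(t) = t^p ln(1+t)`, the derivative `(tφ(t))'` has the stated closed form,
and `p - 1 ≤ (tφ(t))'/φ(t) ≤ p` for all `t > 0`. -/
theorem example_two
    (p : ℝ) (hp : 1 ≤ p)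
    (φ : ℝ → ℝ)
    (hφ : ∀ t > (0 : ℝ),
      φ t = (p * t ^ (p - 2) * (1 + t) * Real.log (1 + t) + t ^ (p - 1)) / (1 + t)) :
    (∀ t ≥ (0 : ℝ), ∫ s in (0 : ℝ)..t, s * φ s = t ^ p * Real.log (1 + t)) ∧
    (∀ t > (0 : ℝ),
      deriv (fun s => s * φ s) t =
        t ^ (p - 2) * (p * (p - 1) * Real.log (1 + t) + 2 * p * t / (1 + t)
          - t ^ 2 / (1 + t) ^ 2)) ∧
    (∀ t > (0 : ℝ),
      p - 1 ≤ deriv (fun s => s * φ s) t / φ t ∧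
      deriv (fun s => s * φ s) t / φ t ≤ p) := by
  have hp0 : (0:ℝ) < p := by linarith
  -- pointwise identity for s > 0
  have hkey : ∀ s > (0:ℝ),
      s * φ s = p * s ^ (p-1) * Real.log (1+s) + s ^ p / (1+s) := by
    intro s hs
    have h1s : (0:ℝ) < 1 + s := by linarith
    have e1 : s ^ (p-1) = s ^ (p-2) * s := by
      rw [show p - 1 = p - 2 + 1 by ring, Real.rpow_add_one hs.ne']
    have e2 : s ^ p = s ^ (p-2) * s * s := by
      rw [show s ^ (p-2) * s * s = s ^ (p-2) * s ^ (1:ℝ) * s ^ (1:ℝ) by rw [Real.rpow_one],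
        ← Real.rpow_add hs, ← Real.rpow_add hs, show p - 2 + 1 + 1 = p by ring]
    rw [hφ s hs, e1, e2]
    field_simp
  -- Part 2
  have part2 : ∀ t > (0:ℝ),
      deriv (fun s => s * φ s) t =
        t ^ (p - 2) * (p * (p - 1) * Real.log (1 + t) + 2 * p * t / (1 + t)
          - t ^ 2 / (1 + t) ^ 2) := by
    intro t ht
    have hev : (fun s => s * φ s)
        =ᶠ[𝓝 t] (fun s => p * s ^ (p-1) * Real.log (1+s) + s ^ p / (1+s)) := by
      filter_upwards [eventually_gt_nhds ht] with s hs using hkey s hs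
    rw [hev.deriv_eq, (auxDeriv p t ht).deriv]
  refine ⟨?_, part2, ?_⟩
  · -- Part 1
    intro t ht0
    have hcong : ∫ s in (0:ℝ)..t, s * φ s
        = ∫ s in (0:ℝ)..t, p * s ^ (p-1) * Real.log (1+s) + s ^ p / (1+s) := by
      apply intervalIntegral.integral_congr
      intro s hs
      rw [uIcc_of_le ht0] at hs
      rcases eq_or_lt_of_le hs.1 with h0 | h0
      · simp [← h0, Real.zero_rpow hp0.ne']
      · exact hkey s h0
    rw [hcong]
    have hlogcont : ContinuousOn (fun s : ℝ => Real.log (1+s)) (Icc 0 t) := by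
      apply ContinuousOn.log (by fun_prop)
      intro x hx; nlinarith [hx.1]
    have hFcont : ContinuousOn (fun s : ℝ => s ^ p * Real.log (1+s)) (Icc 0 t) :=
      (continuousOn_id.rpow_const fun x _ => Or.inr hp0.le).mul hlogcont
    have hint : IntervalIntegrable
        (fun s : ℝ => p * s ^ (p-1) * Real.log (1+s) + s ^ p / (1+s)) MeasureTheory.volume 0 t := by
      apply ContinuousOn.intervalIntegrable
      rw [uIcc_of_le ht0]
      apply ContinuousOn.add
      · exact (continuousOn_const.mul
          (continuousOn_id.rpow_const fun x _ => Or.inr (by linarith))).mul hlogcont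
      · exact (continuousOn_id.rpow_const fun x _ => Or.inr hp0.le).div
          (by fun_prop) (fun x hx => by nlinarith [hx.1])
    have hFTC := intervalIntegral.integral_eq_sub_of_hasDeriv_right_of_le ht0 hFcont
      (fun x hx => (auxDerivF p x hx.1).hasDerivWithinAt) hint
    rw [hFTC]
    simp [Real.zero_rpow hp0.ne']
  · -- Part 3
    intro t ht
    have h1t : (0:ℝ) < 1 + t := by linarith
    have hA0 : (0:ℝ) < t / (1+t) := by positivity
    have hA1 : t / (1+t) ≤ 1 := by rw [div_le_one h1t]; linarith
    have hL : t / (1+t) ≤ Real.log (1+t) := log_ge_aux t ht.le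
    have hL0 : (0:ℝ) ≤ Real.log (1+t) := le_trans hA0.le hL
    have hpow : (0:ℝ) < t ^ (p-2) := Real.rpow_pos_of_pos ht _
    have e1 : t ^ (p-1) = t ^ (p-2) * t := by
      rw [show p - 1 = p - 2 + 1 by ring, Real.rpow_add_one ht.ne']
    have hG : φ t = t ^ (p-2) * (p * Real.log (1+t) + t/(1+t)) := by
      rw [hφ t ht, e1]; field_simp
    have hD : deriv (fun s => s * φ s) t
        = t ^ (p-2) * (p*(p-1)*Real.log (1+t) + 2*p*(t/(1+t)) - (t/(1+t))^2) := by
      rw [part2 t ht, ← div_pow, mul_div_assoc]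
    have hφpos : 0 < φ t := by
      rw [hG]
      apply mul_pos hpow
      nlinarith
    set L := Real.log (1+t) with hLdef
    set A := t/(1+t) with hAdef
    set a := t ^ (p-2) with hadef
    constructor
    · rw [le_div_iff₀ hφpos, hD, hG]
      have key : (p-1) * (p*L + A) ≤ p*(p-1)*L + 2*p*A - A^2 := by
        nlinarith [mul_le_mul_of_nonneg_left hA1 hA0.le]
      rw [show (p-1) * (a * (p*L + A)) = a * ((p-1) * (p*L + A)) by ring]
      exact mul_le_mul_of_nonneg_left key hpow.le
    · rw [div_le_iff₀ hφpos, hD, hG]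
      have key : p*(p-1)*L + 2*p*A - A^2 ≤ p * (p*L + A) := by
        nlinarith [mul_nonneg hp0.le (sub_nonneg.2 hL), sq_nonneg A]
      rw [show p * (a * (p*L + A)) = a * (p * (p*L + A)) by ring]
      exact mul_le_mul_of_nonneg_left key hpow.le
end

section
/- Let p ≥ 1 and φ(t) = (p t^{p−2}(1 + t)ln(1 + t) + t^{p−1})/(1 + t) for t > 0. Then the function t ↦ (tφ(t))′/φ(t) = (2p(1+t)t − t² + p(p−1)(1+t)² ln(1+t)) / ((1+t)(t + p(1+t)ln(1+t))) is decreasing on (0,∞), and (tφ(t))′/φ(t) → p as t → 0⁺ while (tφ(t))′/φ(t) → p − 1 as t → ∞. -/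
open Set Filter Real
open scoped Topology

private lemma hcast' {f : ℝ → ℝ} {d d' x : ℝ} (h : HasDerivAt f d x) (e : d = d') :
    HasDerivAt f d' x := e ▸ h

private lemma log_slope_lim : Tendsto (fun t : ℝ => Real.log (1 + t) / t) (𝓝[>] 0) (𝓝 1) := by
  have h : HasDerivAt (fun t : ℝ => Real.log (1 + t)) 1 0 := by
    have h0 := (Real.hasDerivAt_log (by norm_num : (1:ℝ) + 0 ≠ 0)).comp 0
      ((hasDerivAt_id (0:ℝ)).const_add 1)
    exact hcast' h0 (by norm_num)
  have h2 := hasDerivAt_iff_tendsto_slope.1 h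
  have h3 := h2.mono_left (nhdsWithin_mono 0 (fun x (hx : x ∈ Ioi (0:ℝ)) => ne_of_gt hx))
  refine h3.congr fun t => ?_
  simp [slope_def_field]

/-- Example: for `φ(t) = (p t^{p-2}(1+t)ln(1+t) + t^{p-1})/(1+t)` with `p ≥ 1`, the
quotient `(tφ(t))'/φ(t)` has the stated closed form, is decreasing on `(0,∞)`, tends to
`p` as `t → 0⁺` and to `p - 1` as `t → ∞`. -/
theorem example_two_quotient
    (p : ℝ) (hp : 1 ≤ p)
    (φ : ℝ → ℝ)
    (hφ : ∀ t > (0 : ℝ),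
      φ t = (p * t ^ (p - 2) * (1 + t) * Real.log (1 + t) + t ^ (p - 1)) / (1 + t)) :
    (∀ t > (0 : ℝ),
      deriv (fun s => s * φ s) t / φ t =
        (2 * p * (1 + t) * t - t ^ 2 + p * (p - 1) * (1 + t) ^ 2 * Real.log (1 + t)) /
          ((1 + t) * (t + p * (1 + t) * Real.log (1 + t)))) ∧
    AntitoneOn (fun t => deriv (fun s => s * φ s) t / φ t) (Ioi 0) ∧
    Tendsto (fun t => deriv (fun s => s * φ s) t / φ t) (𝓝[>] 0) (𝓝 p) ∧
    Tendsto (fun t => deriv (fun s => s * φ s) t / φ t) atTop (𝓝 (p - 1)) := by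
  have hp0 : (0:ℝ) < p := by linarith
  -- Part 1: the closed form
  have key1 : ∀ t > (0:ℝ),
      deriv (fun s => s * φ s) t / φ t =
        (2 * p * (1 + t) * t - t ^ 2 + p * (p - 1) * (1 + t) ^ 2 * Real.log (1 + t)) /
          ((1 + t) * (t + p * (1 + t) * Real.log (1 + t))) := by
    intro t ht
    have h1t : (0:ℝ) < 1 + t := by linarith
    have hlogpos : 0 < Real.log (1 + t) := Real.log_pos (by linarith)
    have heq : (fun s => s * φ s) =ᶠ[𝓝 t]
        (fun s : ℝ => p * (s ^ (p-1) * Real.log (1 + s)) + s ^ p / (1 + s)) := by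
      filter_upwards [isOpen_Ioi.mem_nhds ht] with s hs
      have hs' : (0:ℝ) < s := hs
      have h1s : (0:ℝ) < 1 + s := by linarith
      have e1 : s ^ (p-1) = s ^ (p-2) * s := by
        rw [show p - 1 = (p - 2) + 1 by ring, Real.rpow_add_one hs'.ne']
      have e2 : s ^ p = s ^ (p-2) * s * s := by
        rw [← Real.rpow_add_one hs'.ne', ← Real.rpow_add_one hs'.ne']
        congr 1
        ring
      rw [hφ s hs', e1, e2]
      field_simp
    have hlog : HasDerivAt (fun s : ℝ => Real.log (1 + s)) (1/(1+t)) t := by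
      have h0 := (Real.hasDerivAt_log h1t.ne').comp t ((hasDerivAt_id t).const_add 1)
      exact hcast' h0 (by field_simp)
    have hrp1 : HasDerivAt (fun s : ℝ => s ^ (p-1)) ((p-1) * t ^ (p-2)) t := by
      have h := Real.hasDerivAt_rpow_const (x := t) (p := p-1) (Or.inl ht.ne')
      rw [show p - 2 = p - 1 - 1 by ring]
      exact h
    have hrp : HasDerivAt (fun s : ℝ => s ^ p) (p * t ^ (p-1)) t :=
      Real.hasDerivAt_rpow_const (x := t) (p := p) (Or.inl ht.ne')
    have hden : HasDerivAt (fun s : ℝ => 1 + s) 1 t := (hasDerivAt_id t).const_add 1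
    have hg' : HasDerivAt (fun s : ℝ => p * (s ^ (p-1) * Real.log (1 + s)) + s ^ p / (1 + s))
        (p * ((p-1) * t ^ (p-2) * Real.log (1+t) + t ^ (p-1) * (1/(1+t)))
          + (p * t ^ (p-1) * (1+t) - t ^ p * 1)/(1+t)^2) t :=
      ((hrp1.mul hlog).const_mul p).add (hrp.div hden h1t.ne')
    have hderiv : deriv (fun s => s * φ s) t
        = p * ((p-1) * t ^ (p-2) * Real.log (1+t) + t ^ (p-1) * (1/(1+t)))
          + (p * t ^ (p-1) * (1+t) - t ^ p * 1)/(1+t)^2 := by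
      rw [heq.deriv_eq]; exact hg'.deriv
    have ha : (0:ℝ) < t ^ (p-2) := Real.rpow_pos_of_pos ht _
    have e1 : t ^ (p-1) = t ^ (p-2) * t := by
      rw [show p - 1 = (p - 2) + 1 by ring, Real.rpow_add_one ht.ne']
    have e2 : t ^ p = t ^ (p-2) * t * t := by
      rw [← Real.rpow_add_one ht.ne', ← Real.rpow_add_one ht.ne']
      congr 1
      ring
    have hDpos : (0:ℝ) < (1 + t) * (t + p * (1 + t) * Real.log (1 + t)) := by
      have : (0:ℝ) < p * (1+t) * Real.log (1+t) := by positivity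
      nlinarith
    have hφpos : (0:ℝ) < φ t := by
      rw [hφ t ht]
      apply div_pos _ h1t
      have : (0:ℝ) < p * t ^ (p-2) * (1+t) * Real.log (1+t) := by positivity
      have h2 : (0:ℝ) < t ^ (p-1) := Real.rpow_pos_of_pos ht _
      linarith
    rw [hderiv, div_eq_div_iff hφpos.ne' hDpos.ne', hφ t ht, e1, e2]
    field_simp
    ring
  -- the comparison function
  have hDdpos : ∀ t : ℝ, 0 < t → (0:ℝ) < (1+t)*t + p*((1+t)^2*Real.log (1+t)) := by
    intro t ht
    have h1t : (0:ℝ) < 1 + t := by linarith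
    have hlogpos : 0 < Real.log (1 + t) := Real.log_pos (by linarith)
    have : (0:ℝ) < p*((1+t)^2*Real.log (1+t)) := by positivity
    nlinarith
  have key2 : ∀ t ∈ Ioi (0:ℝ), deriv (fun s => s * φ s) t / φ t
      = (p-1) + (p*t^2 + (p+1)*t)/((1+t)*t + p*((1+t)^2*Real.log (1+t))) := by
    intro t ht
    have ht' : (0:ℝ) < t := ht
    have h1t : (0:ℝ) < 1 + t := by linarith
    have hlogpos : 0 < Real.log (1 + t) := Real.log_pos (by linarith)
    have hDpos : (0:ℝ) < (1 + t) * (t + p * (1 + t) * Real.log (1 + t)) := by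
      have : (0:ℝ) < p * (1+t) * Real.log (1+t) := by positivity
      nlinarith
    have hring : (1+t) * (t + p*(1+t)*Real.log (1+t))
        = (1+t)*t + p*((1+t)^2*Real.log (1+t)) := by ring
    rw [key1 t ht', hring, div_eq_iff (hDdpos t ht').ne', add_mul,
      div_mul_cancel₀ _ (hDdpos t ht').ne']
    ring
  -- derivative of the comparison function
  have hGd : ∀ t ∈ Ioi (0:ℝ), HasDerivAt
      (fun t : ℝ => (p-1) + (p*t^2 + (p+1)*t)/((1+t)*t + p*((1+t)^2*Real.log (1+t))))
      (((2*p*t + (p+1)) * ((1+t)*t + p*((1+t)^2*Real.log (1+t)))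
          - (p*t^2 + (p+1)*t) * ((1 + 2*t) + p*(2*(1+t)*Real.log (1+t) + (1+t))))
        / ((1+t)*t + p*((1+t)^2*Real.log (1+t)))^2) t := by
    intro t ht
    have ht' : (0:ℝ) < t := ht
    have h1t : (0:ℝ) < 1 + t := by linarith
    have hlog : HasDerivAt (fun s : ℝ => Real.log (1 + s)) (1/(1+t)) t := by
      have h0 := (Real.hasDerivAt_log h1t.ne').comp t ((hasDerivAt_id t).const_add 1)
      exact hcast' h0 (by field_simp)
    have hnum : HasDerivAt (fun t : ℝ => p*t^2 + (p+1)*t) (2*p*t + (p+1)) t :=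
      hcast' (((hasDerivAt_pow 2 t).const_mul p).add ((hasDerivAt_id t).const_mul (p+1)))
        (by push_cast; ring)
    have hb1 : HasDerivAt (fun s : ℝ => (1+s)*s) (1*t + (1+t)*1) t :=
      ((hasDerivAt_id t).const_add 1).mul (hasDerivAt_id t)
    have hb3 : HasDerivAt (fun s : ℝ => (1+s)^2 * Real.log (1+s))
        ((↑2*(1+t)^(2-1)*1) * Real.log (1+t) + (1+t)^2 * (1/(1+t))) t :=
      (((hasDerivAt_id t).const_add 1).pow 2).mul hlog
    have hdd : HasDerivAt (fun t : ℝ => (1+t)*t + p*((1+t)^2*Real.log (1+t)))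
        ((1 + 2*t) + p*(2*(1+t)*Real.log (1+t) + (1+t))) t :=
      hcast' (hb1.add (hb3.const_mul p)) (by field_simp; ring)
    exact (hnum.div hdd (hDdpos t ht').ne').const_add (p-1)
  have hGanti : AntitoneOn
      (fun t : ℝ => (p-1) + (p*t^2 + (p+1)*t)/((1+t)*t + p*((1+t)^2*Real.log (1+t))))
      (Ioi 0) := by
    apply antitoneOn_of_deriv_nonpos (convex_Ioi 0)
    · intro t ht
      exact ((hGd t ht).differentiableAt.continuousAt).continuousWithinAt
    · rw [interior_Ioi]
      intro t ht
      exact (hGd t ht).differentiableAt.differentiableWithinAt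
    · rw [interior_Ioi]
      intro t ht
      rw [(hGd t ht).deriv]
      apply div_nonpos_of_nonpos_of_nonneg _ (sq_nonneg _)
      have ht' : (0:ℝ) < t := ht
      have h1t : (0:ℝ) < 1 + t := by linarith
      have hlogpos : 0 < Real.log (1 + t) := Real.log_pos (by linarith)
      have hlogle : Real.log (1 + t) ≤ t := by
        have := Real.log_le_sub_one_of_pos h1t
        linarith
      have h1 : 0 ≤ p*(1+t)*((p-1)*t + (p+1)) * (t - Real.log (1+t)) := by
        apply mul_nonneg
        apply mul_nonneg
        apply mul_nonneg (by linarith) (by linarith)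
        · nlinarith
        · linarith
      nlinarith [mul_nonneg (by linarith : (0:ℝ) ≤ p) (by positivity : (0:ℝ) ≤ t^3),
        mul_nonneg (by linarith : (0:ℝ) ≤ p+1) (by positivity : (0:ℝ) ≤ t^2)]
  -- limit at 0+
  have hlim0 : Tendsto
      (fun t : ℝ => (p-1) + (p*t^2 + (p+1)*t)/((1+t)*t + p*((1+t)^2*Real.log (1+t))))
      (𝓝[>] 0) (𝓝 p) := by
    have hnum : Tendsto (fun t : ℝ => p*t + (p+1)) (𝓝[>] (0:ℝ)) (𝓝 (p+1)) := by
      have h : Tendsto (fun t : ℝ => p*t + (p+1)) (𝓝 (0:ℝ)) (𝓝 (p*0 + (p+1))) := by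
        exact ((continuous_const.mul continuous_id).add continuous_const).tendsto 0
      simpa using h.mono_left nhdsWithin_le_nhds
    have hden : Tendsto (fun t : ℝ => (1+t) + p*(1+t)^2 * (Real.log (1+t)/t))
        (𝓝[>] (0:ℝ)) (𝓝 (1 + p)) := by
      have h1 : Tendsto (fun t : ℝ => (1:ℝ)+t) (𝓝[>] (0:ℝ)) (𝓝 1) := by
        have := (continuous_const.add continuous_id (f := fun t : ℝ => (1:ℝ))).tendsto 0
        simpa [Pi.add_def] using this.mono_left nhdsWithin_le_nhds
      have h2 : Tendsto (fun t : ℝ => p*(1+t)^2) (𝓝[>] (0:ℝ)) (𝓝 p) := by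
        have : Tendsto (fun t : ℝ => p*(1+t)^2) (𝓝 (0:ℝ)) (𝓝 (p*(1+0)^2)) := by
          exact (continuous_const.mul ((continuous_const.add continuous_id).pow 2)).tendsto 0
        simpa using this.mono_left nhdsWithin_le_nhds
      have h3 := h2.mul log_slope_lim
      have h4 := h1.add h3
      simpa [mul_assoc] using h4
    have hratio : Tendsto
        (fun t : ℝ => (p*t + (p+1)) / ((1+t) + p*(1+t)^2 * (Real.log (1+t)/t)))
        (𝓝[>] (0:ℝ)) (𝓝 1) := by
      have := hnum.div hden (by linarith : (1:ℝ)+p ≠ 0)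
      have heq1 : (p+1)/(1+p) = (1:ℝ) := by
        rw [div_eq_one_iff_eq (by linarith : (1:ℝ)+p ≠ 0)]; ring
      rwa [heq1] at this
    have hratio2 : Tendsto
        (fun t : ℝ => (p*t^2 + (p+1)*t)/((1+t)*t + p*((1+t)^2*Real.log (1+t))))
        (𝓝[>] (0:ℝ)) (𝓝 1) := by
      refine hratio.congr' ?_
      filter_upwards [self_mem_nhdsWithin] with t (ht : (0:ℝ) < t)
      rw [div_eq_div_iff]
      · field_simp
      · have h1t : (0:ℝ) < 1 + t := by linarith
        have hlogpos : 0 < Real.log (1 + t) := Real.log_pos (by linarith)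
        have h5 : (0:ℝ) < Real.log (1+t)/t := div_pos hlogpos ht
        have h6 : (0:ℝ) < p*(1+t)^2 * (Real.log (1+t)/t) :=
          mul_pos (mul_pos hp0 (pow_pos h1t 2)) h5
        intro hcontra
        nlinarith
      · exact (hDdpos t ht).ne'
    have := hratio2.const_add (p-1)
    simpa using this
  have hlimtop : Tendsto
      (fun t : ℝ => (p-1) + (p*t^2 + (p+1)*t)/((1+t)*t + p*((1+t)^2*Real.log (1+t))))
      atTop (𝓝 (p-1)) := by
    have hnum2 : Tendsto (fun t : ℝ => p + (p+1)/t) atTop (𝓝 p) := by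
      have h := (tendsto_const_nhds (x := (p+1)) (f := atTop)).div_atTop
        (tendsto_id (α := ℝ))
      simpa using (tendsto_const_nhds (x := p) (f := atTop (α := ℝ))).add h
    have h1 : Tendsto (fun t : ℝ => (1+t)/t) atTop (𝓝 1) := by
      have h := (tendsto_const_nhds (x := (1:ℝ)) (f := atTop)).div_atTop
        (tendsto_id (α := ℝ))
      have h2 := h.add (tendsto_const_nhds (x := (1:ℝ)) (f := atTop (α := ℝ)))
      rw [zero_add] at h2
      refine h2.congr' ?_
      filter_upwards [eventually_gt_atTop (0:ℝ)] with t ht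
      simp only [id]
      field_simp
    have hlogtop : Tendsto (fun t : ℝ => Real.log (1+t)) atTop atTop :=
      Real.tendsto_log_atTop.comp (tendsto_atTop_add_const_left _ 1 tendsto_id)
    have h2 : Tendsto (fun t : ℝ => p*((1+t)/t)^2) atTop (𝓝 p) := by
      have := (tendsto_const_nhds (x := p) (f := atTop (α := ℝ))).mul (h1.pow 2)
      simpa using this
    have h3 : Tendsto (fun t : ℝ => p*((1+t)/t)^2 * Real.log (1+t)) atTop atTop :=
      Filter.Tendsto.pos_mul_atTop hp0 h2 hlogtop
    have hden2 : Tendsto (fun t : ℝ => (1+t)/t + p*((1+t)/t)^2 * Real.log (1+t)) atTop atTop := by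
      apply tendsto_atTop_add_left_of_le' atTop (0:ℝ) _ h3
      filter_upwards [eventually_gt_atTop (0:ℝ)] with t ht
      positivity
    have hkey := hnum2.div_atTop hden2
    have hratio3 : Tendsto
        (fun t : ℝ => (p*t^2 + (p+1)*t)/((1+t)*t + p*((1+t)^2*Real.log (1+t))))
        atTop (𝓝 0) := by
      refine hkey.congr' ?_
      filter_upwards [eventually_gt_atTop (0:ℝ)] with t ht
      have hDd := hDdpos t ht
      have hlogpos : 0 < Real.log (1 + t) := Real.log_pos (by linarith)
      have hd2 : (0:ℝ) < (1+t)/t + p*((1+t)/t)^2 * Real.log (1+t) := by positivity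
      rw [div_eq_div_iff hd2.ne' hDd.ne']
      field_simp
    have := hratio3.const_add (p-1)
    simpa using this
  refine ⟨key1, ?_, ?_, ?_⟩
  · intro a ha b hb hab
    simp only []
    rw [key2 a ha, key2 b hb]
    exact hGanti ha hb hab
  · refine hlim0.congr' ?_
    filter_upwards [self_mem_nhdsWithin] with t ht
    exact (key2 t ht).symm
  · refine hlimtop.congr' ?_
    filter_upwards [eventually_gt_atTop (0:ℝ)] with t ht
    exact (key2 t ht).symm
end
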